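/- arXiv:2104.04339 — 4 statements merged into one kernel-verified Lean document; each statement's English description precedes it below -/
import Mathlib

section
/- Let M be a first-order L-structure and let f : M^k → M^l be an L-definable (without parameters) function with uniformly finite fibres, say |f^{-1}(b)| ≤ N for all b in the image of f. Suppose B ⊆ M^l is contained in the image of f, and let B̃ := f^{-1}(B) ⊆ M^k. Let A ⊆ M^x and let φ(x,y) be an L-formula with y of length l, such that the formula φ(x; f(z)) (with z of length k) has a uniform strong honest definition on A over B̃. Then φ(x;y) has a uniform strong honest definition on A over B. -/
open FirstOrder

variable {L : Language} {M : Type*} [L.Structure M]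

/-- `ζ(x;z)` is a uniform strong honest definition (USHD) for the relation
`Φ : (M^n) × (M^m) → Prop` (thought of as a partitioned formula `φ(x;y)`) on `A ⊆ M^x` over
`B ⊆ M^y`: for every `a ∈ A` and every finite `B₀ ⊆ B` with `|B₀| ≥ 2` there is a tuple `d` of
elements appearing (as coordinates) in `B₀` such that `M ⊨ ζ(a,d)` and `ζ(x,d)` implies the
`Φ`-type of `a` over `B₀`. -/
def IsUSHD {n m k : ℕ} (ζ : L.Formula (Fin n ⊕ Fin k))
    (Φ : (Fin n → M) → (Fin m → M) → Prop)
    (A : Set (Fin n → M)) (B : Set (Fin m → M)) : Prop :=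
  ∀ a ∈ A, ∀ B₀ : Set (Fin m → M), B₀.Finite → B₀ ⊆ B → 2 ≤ B₀.ncard →
    ∃ d : Fin k → M, (∀ i, ∃ c ∈ B₀, ∃ j, c j = d i) ∧ ζ.Realize (Sum.elim a d) ∧
      ∀ a' : Fin n → M, ζ.Realize (Sum.elim a' d) →
        ∀ c ∈ B₀, (Φ a' c ↔ Φ a c)

/-- The relation `Φ` has a uniform strong honest definition on `A` over `B`. -/
def HasUSHD (L : Language) {M : Type*} [L.Structure M] {n m : ℕ}
    (Φ : (Fin n → M) → (Fin m → M) → Prop)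
    (A : Set (Fin n → M)) (B : Set (Fin m → M)) : Prop :=
  ∃ (k : ℕ) (ζ : L.Formula (Fin n ⊕ Fin k)), IsUSHD ζ Φ A B

open Language in
private lemma realize_iInf0 {L : Language} {M : Type*} [L.Structure M] {β α : Type*} [Finite β]
    (f : β → L.Formula α) (v : α → M) :
    Formula.Realize (BoundedFormula.iInf f) v ↔ ∀ b, (f b).Realize v :=
  BoundedFormula.realize_iInf

open Language in
private lemma realize_iSup0 {L : Language} {M : Type*} [L.Structure M] {β α : Type*} [Finite β]
    (f : β → L.Formula α) (v : α → M) :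
    Formula.Realize (BoundedFormula.iSup f) v ↔ ∃ b, (f b).Realize v :=
  BoundedFormula.realize_iSup

private lemma exists_fin_cover {α : Type*} [Nonempty α] {s : Set α} (hs : s.Finite) {N : ℕ}
    (hcard : s.ncard ≤ N) : ∃ g : Fin N → α, s ⊆ Set.range g := by
  classical
  obtain ⟨t, rfl⟩ := hs.exists_finset_coe
  rw [Set.ncard_coe_finset] at hcard
  refine ⟨fun i => t.toList.getD i (Classical.arbitrary α), ?_⟩
  intro x hx
  have hxl : x ∈ t.toList := by simpa using hx
  obtain ⟨i, hi, hget⟩ := List.mem_iff_getElem.1 hxl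
  have hlen : t.toList.length = t.card := Finset.length_toList t
  refine ⟨⟨i, by omega⟩, ?_⟩
  simp only [List.getD]
  rw [List.getElem?_eq_getElem hi]
  simpa using hget

private abbrev Blk (k' E l : ℕ) : Type :=
  (Fin k' × Fin l) ⊕ ((Fin E × Fin l) ⊕ ((Fin E × Fin l) ⊕ Fin l))

open Language in
private noncomputable def zeta' {L : Language} {k l n k' E : ℕ}
    (θ : L.Formula (Fin k ⊕ Fin l)) (ζ : L.Formula (Fin n ⊕ Fin k'))
    (φ : L.Formula (Fin n ⊕ Fin l)) :
    L.Formula (Fin n ⊕ Fin (Fintype.card (Blk k' E l))) :=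
  let ι : Blk k' E l → Fin n ⊕ Fin (Fintype.card (Blk k' E l)) :=
    fun g => Sum.inr (Fintype.equivFin _ g)
  Formula.iExs (Fin k') <|
    (BoundedFormula.iInf fun i : Fin k' =>
      Formula.iExs (Fin k) <|
        (θ.relabel (Sum.elim (fun j => Sum.inr j)
            (fun jl => Sum.inl (Sum.inl (ι (Sum.inl (i, jl)))))))
        ⊓ (BoundedFormula.iSup fun j : Fin k =>
            Term.equal (Term.var (Sum.inr j)) (Term.var (Sum.inl (Sum.inr i)))))
    ⊓ ((ζ.relabel (Sum.elim (fun m => Sum.inl (Sum.inl m)) Sum.inr))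
    ⊓ (Formula.iAlls (Fin n) <|
        (ζ.relabel (Sum.elim (fun m => Sum.inr m) (fun i => Sum.inl (Sum.inr i)))).imp
          (BoundedFormula.iInf fun s : Fin E =>
            Formula.iff
              (φ.relabel (Sum.elim (fun m => Sum.inr m)
                (fun jl => Sum.inl (Sum.inl (ι (Sum.inr (Sum.inl (s, jl))))))))
              (BoundedFormula.iInf fun jl : Fin l =>
                Term.equal
                  (Term.var (Sum.inl (Sum.inl (ι (Sum.inr (Sum.inr (Sum.inl (s, jl))))))))
                  (Term.var (Sum.inl (Sum.inl (ι (Sum.inr (Sum.inr (Sum.inr jl)))))))))))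

set_option maxHeartbeats 1000000 in
open Language in
private lemma realize_zeta' {L : Language} {M : Type*} [L.Structure M] {k l n k' E : ℕ}
    (θ : L.Formula (Fin k ⊕ Fin l)) (ζ : L.Formula (Fin n ⊕ Fin k'))
    (φ : L.Formula (Fin n ⊕ Fin l)) (x : Fin n → M)
    (Dv : Fin (Fintype.card (Blk k' E l)) → M) :
    (zeta' θ ζ φ).Realize (Sum.elim x Dv) ↔
      ∃ e : Fin k' → M,
        (∀ i : Fin k', ∃ w : Fin k → M,
            (θ.Realize (Sum.elim w fun jl =>
              Dv (Fintype.equivFin (Blk k' E l) (Sum.inl (i, jl))))) ∧ ∃ j, w j = e i) ∧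
        ζ.Realize (Sum.elim x e) ∧
        ∀ x' : Fin n → M, ζ.Realize (Sum.elim x' e) → ∀ s : Fin E,
          ((φ.Realize (Sum.elim x' fun jl =>
              Dv (Fintype.equivFin (Blk k' E l) (Sum.inr (Sum.inl (s, jl)))))) ↔
            ∀ jl : Fin l,
              Dv (Fintype.equivFin (Blk k' E l) (Sum.inr (Sum.inr (Sum.inl (s, jl))))) =
              Dv (Fintype.equivFin (Blk k' E l) (Sum.inr (Sum.inr (Sum.inr jl))))) := by
  simp only [zeta', Formula.realize_iExs, Formula.realize_inf, Formula.realize_iAlls,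
    Formula.realize_imp, Formula.realize_iff, Formula.realize_relabel,
    realize_iInf0, realize_iSup0, Formula.realize_equal,
    Term.realize_var, Finset.mem_univ, forall_true_left, true_and, id_eq,
    Function.comp_def, Sum.elim_inl, Sum.elim_inr]
  apply exists_congr; intro e
  apply and_congr
  · apply forall_congr'; intro i0
    apply exists_congr; intro w
    exact and_congr
      (iff_of_eq (congrArg θ.Realize (funext fun p => by rcases p with j | jl <;> rfl)))
      Iff.rfl
  apply and_congr
  · exact iff_of_eq (congrArg ζ.Realize (funext fun p => by rcases p with m | i0 <;> rfl))
  apply forall_congr'; intro x'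
  apply imp_congr
  · exact iff_of_eq (congrArg ζ.Realize (funext fun p => by rcases p with m | i0 <;> rfl))
  apply forall_congr'; intro s
  exact iff_congr
    (iff_of_eq (congrArg φ.Realize (funext fun p => by rcases p with m | jl <;> rfl)))
    Iff.rfl

set_option maxHeartbeats 1000000 in
/-- **Transfer of USHDs along definable finite-to-one maps** (Lemma 3.4).

Let `f : M^k → M^l` be an `L`-definable (without parameters) function with uniformly finite
fibres, `|f⁻¹(b)| ≤ N` for all `b` in the image of `f`.  Suppose `B ⊆ M^l` is contained in the
image of `f` and let `B̃ = f⁻¹(B)`.  Let `A ⊆ M^x` and let `φ(x,y)` be an `L`-formula such that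
`φ(x; f(z))` has a USHD on `A` over `B̃`.  Then `φ(x;y)` has a USHD on `A` over `B`. -/
theorem hasUSHD_of_hasUSHD_comp_definable_finite_fibres
    {k l n : ℕ} (N : ℕ) (f : (Fin k → M) → (Fin l → M))
    (hdef : Set.Definable (∅ : Set M) L
      {v : (Fin k ⊕ Fin l) → M | v ∘ Sum.inr = f (v ∘ Sum.inl)})
    (hfib : ∀ b ∈ Set.range f, (f ⁻¹' {b}).Finite ∧ (f ⁻¹' {b}).ncard ≤ N)
    (B : Set (Fin l → M)) (hB : B ⊆ Set.range f)
    (A : Set (Fin n → M)) (φ : L.Formula (Fin n ⊕ Fin l))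
    (hUSHD : HasUSHD L (fun a z => φ.Realize (Sum.elim a (f z))) A (f ⁻¹' B)) :
    HasUSHD L (fun a b => φ.Realize (Sum.elim a b)) A B := by
  classical
  obtain ⟨k', ζ, hζ⟩ := hUSHD
  obtain ⟨θ, hθ⟩ := Set.empty_definable_iff.1 hdef
  have hθ' : ∀ (w : Fin k → M) (b : Fin l → M), θ.Realize (Sum.elim w b) ↔ f w = b := by
    intro w b
    have h1 := Set.ext_iff.1 hθ (Sum.elim w b)
    simp only [Set.mem_setOf_eq, Sum.elim_comp_inl, Sum.elim_comp_inr] at h1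
    rw [← h1]; exact eq_comm
  set E := Fintype.card (Fin k' → Fin N × Fin k) with hE
  refine ⟨Fintype.card (Blk k' E l), zeta' θ ζ φ, ?_⟩
  intro a ha B₀ hB₀fin hB₀sub hB₀card
  obtain ⟨b1, hb1, b2, hb2, hb12⟩ := (Set.one_lt_ncard hB₀fin).1 (by omega)
  have hMne : Nonempty M := by
    obtain ⟨jx, -⟩ := Function.ne_iff.1 hb12
    exact ⟨b1 jx⟩
  have htfin : (f ⁻¹' B₀).Finite := by
    rw [← Set.biUnion_preimage_singleton]
    exact hB₀fin.biUnion (fun b hb => (hfib b (hB (hB₀sub hb))).1)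
  have htsub : f ⁻¹' B₀ ⊆ f ⁻¹' B := Set.preimage_mono hB₀sub
  have htcard : 2 ≤ (f ⁻¹' B₀).ncard := by
    obtain ⟨x1, hx1⟩ := hB (hB₀sub hb1)
    obtain ⟨x2, hx2⟩ := hB (hB₀sub hb2)
    have h2 : 1 < (f ⁻¹' B₀).ncard := (Set.one_lt_ncard htfin).2
      ⟨x1, by simp [Set.mem_preimage, hx1, hb1], x2, by simp [Set.mem_preimage, hx2, hb2],
        fun hcc => hb12 (by rw [← hx1, ← hx2, hcc])⟩
    omega
  obtain ⟨d, hdco, hdre, hdim⟩ := hζ a ha _ htfin htsub htcard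
  choose c hc j hj using hdco
  set bb : Fin k' → (Fin l → M) := fun i => f (c i) with hbb
  have hbbB₀ : ∀ i, bb i ∈ B₀ := fun i => hc i
  have hen : ∀ i : Fin k', ∃ g : Fin N → (Fin k → M), f ⁻¹' {bb i} ⊆ Set.range g :=
    fun i => exists_fin_cover (hfib (bb i) ⟨c i, rfl⟩).1 (hfib (bb i) ⟨c i, rfl⟩).2
  choose en hen' using hen
  set G : (Fin k' → Fin N × Fin k) → (Fin k' → M) := fun h i => en i (h i).1 ((h i).2) with hG
  set Φ : (Fin n → M) → (Fin l → M) → Prop := fun x' cc => φ.Realize (Sum.elim x' cc) with hΦ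
  set bads : Set (Fin k' → M) := {e | (∀ i, ∃ w, f w = bb i ∧ ∃ j', w j' = e i) ∧
      ∃ cc ∈ B₀, ∃ x', ζ.Realize (Sum.elim x' e) ∧ ¬(Φ x' cc ↔ Φ a cc)} with hbads
  have htc : ∀ e : Fin k' → M, ∃ cc, cc ∈ B₀ ∧ (e ∈ bads →
      ∃ x', ζ.Realize (Sum.elim x' e) ∧ ¬(Φ x' cc ↔ Φ a cc)) := by
    intro e
    by_cases h : e ∈ bads
    · obtain ⟨-, cc, hccB, hw⟩ := h
      exact ⟨cc, hccB, fun _ => hw⟩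
    · exact ⟨b1, hb1, fun h' => absurd h' h⟩
  choose tc htcB htcW using htc
  set cb : Fin E → (Fin l → M) := fun s => tc (G ((Fintype.equivFin _).symm s)) with hcb
  set ub : Fin E → (Fin l → M) := fun s => if Φ a (cb s) then b1 else b2 with hub
  set DΓ : Blk k' E l → M := Sum.elim (fun p => bb p.1 p.2)
    (Sum.elim (fun p => cb p.1 p.2) (Sum.elim (fun p => ub p.1 p.2) (fun jl => b1 jl))) with hDΓ
  set Dv : Fin (Fintype.card (Blk k' E l)) → M :=
    fun t => DΓ ((Fintype.equivFin (Blk k' E l)).symm t) with hDv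
  have hDvB : ∀ g : Blk k' E l, Dv (Fintype.equivFin (Blk k' E l) g) = DΓ g := by
    intro g; rw [hDv]; simp
  have hargB : ∀ i : Fin k',
      (fun jl => Dv (Fintype.equivFin (Blk k' E l) (Sum.inl (i, jl)))) = bb i :=
    fun i => funext fun jl => hDvB _
  have hargC : ∀ s : Fin E,
      (fun jl => Dv (Fintype.equivFin (Blk k' E l) (Sum.inr (Sum.inl (s, jl))))) = cb s :=
    fun s => funext fun jl => hDvB _
  have hbit : ∀ s : Fin E,
      ((∀ jl : Fin l,
        Dv (Fintype.equivFin (Blk k' E l) (Sum.inr (Sum.inr (Sum.inl (s, jl))))) =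
        Dv (Fintype.equivFin (Blk k' E l) (Sum.inr (Sum.inr (Sum.inr jl))))) ↔ Φ a (cb s)) := by
    intro s
    have hrw : ∀ jl : Fin l,
        Dv (Fintype.equivFin (Blk k' E l) (Sum.inr (Sum.inr (Sum.inl (s, jl))))) = ub s jl :=
      fun jl => hDvB _
    have hrw2 : ∀ jl : Fin l,
        Dv (Fintype.equivFin (Blk k' E l) (Sum.inr (Sum.inr (Sum.inr jl)))) = b1 jl :=
      fun jl => hDvB _
    constructor
    · intro h
      by_contra hn
      have hub2 : ub s = b2 := by rw [hub]; simp [hn]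
      have : b2 = b1 := funext fun jl => by
        rw [← congrFun hub2 jl, ← hrw jl, ← hrw2 jl]; exact h jl
      exact hb12 this.symm
    · intro h jl
      have hub1 : ub s = b1 := by rw [hub]; simp [h]
      rw [hrw jl, hrw2 jl, hub1]
  refine ⟨Dv, ?_, ?_, ?_⟩
  · -- coordinates of Dv come from B₀
    intro t
    obtain ⟨g, rfl⟩ : ∃ g, (Fintype.equivFin (Blk k' E l)) g = t :=
      ⟨_, Equiv.apply_symm_apply _ _⟩
    rw [hDvB g]
    rcases g with ⟨i, jl⟩ | (⟨s, jl⟩ | (⟨s, jl⟩ | jl))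
    · exact ⟨bb i, hbbB₀ i, jl, rfl⟩
    · exact ⟨cb s, htcB _, jl, rfl⟩
    · refine ⟨ub s, ?_, jl, rfl⟩
      rw [hub]
      by_cases h : Φ a (cb s) <;> simp [h, hb1, hb2]
    · exact ⟨b1, hb1, jl, rfl⟩
  · -- realization at a
    rw [realize_zeta']
    refine ⟨d, ?_, hdre, ?_⟩
    · intro i
      refine ⟨c i, ?_, j i, hj i⟩
      rw [hargB i, hθ']
    · intro x' hx' s
      rw [hargC s, hbit s]
      obtain ⟨w0, hw0⟩ := hB (hB₀sub (htcB (G ((Fintype.equivFin _).symm s))))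
      have hw0mem : w0 ∈ f ⁻¹' B₀ := by
        simp only [Set.mem_preimage, hw0]
        exact htcB _
      have h2 := hdim x' hx' w0 hw0mem
      simp only at h2
      rw [hw0] at h2
      exact h2
  · -- the implication
    intro a' hre' cc hcc
    rw [realize_zeta'] at hre'
    obtain ⟨e, hadm, hζe, hinner⟩ := hre'
    have hadm' : ∀ i, ∃ w, f w = bb i ∧ ∃ j', w j' = e i := by
      intro i
      obtain ⟨w, hwth, j', hj'⟩ := hadm i
      rw [hargB i, hθ'] at hwth
      exact ⟨w, hwth, j', hj'⟩
    have hengood : e ∉ bads := by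
      intro hbad
      have hrange : ∃ h0, G h0 = e := by
        have hpick : ∀ i, ∃ p : Fin N × Fin k, en i p.1 p.2 = e i := by
          intro i
          obtain ⟨w, hfw, j', hj'⟩ := hadm' i
          have hwr : w ∈ Set.range (en i) := hen' i (by simp [Set.mem_preimage, hfw])
          obtain ⟨m, hm⟩ := hwr
          exact ⟨(m, j'), by rw [hm]; exact hj'⟩
        choose p hp using hpick
        exact ⟨fun i => p i, funext fun i => hp i⟩
      obtain ⟨h0, rfl⟩ := hrange
      have hcb0 : cb (Fintype.equivFin _ h0) = tc (G h0) := by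
        rw [hcb]; simp
      obtain ⟨x'', hx''ζ, hx''w⟩ := htcW (G h0) hbad
      have h1 := hinner x'' hx''ζ (Fintype.equivFin _ h0)
      rw [hargC _, hbit _] at h1
      rw [hcb0] at h1
      exact hx''w h1
    have hno : ∀ cc' ∈ B₀, ∀ x', ζ.Realize (Sum.elim x' e) → (Φ x' cc' ↔ Φ a cc') := by
      intro cc' hcc' x' hx'
      by_contra hn
      exact hengood ⟨hadm', cc', hcc', x', hx', hn⟩
    exact hno cc hcc a' hζe
end

section
/- Let K be a finitely generated field (i.e. K is generated as a field by finitely many elements over its prime field). Then K admits a valuation whose residue field is finite; that is, there is a valuation subring O of K whose residue field O/m(O) is a finite field. -/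
set_option maxHeartbeats 1000000
set_option synthInstance.maxHeartbeats 400000
open IsLocalRing Polynomial

/-- If a valuation subring admits a ring hom into a finite nontrivial ring such that
elements with nonzero image are units, then its residue field is finite. -/
lemma finite_residue_of_hom {K : Type*} [Field K] (O : ValuationSubring K)
    {κ : Type*} [CommRing κ] [Nontrivial κ] [Finite κ] (g : O →+* κ)
    (h : ∀ z : O, g z ≠ 0 → IsUnit z) : Finite (ResidueField O) := by
  have h' : ∀ a ∈ maximalIdeal O, g a = 0 := by
    intro a ha
    by_contra hg
    exact (mem_maximalIdeal a).mp ha (h a hg)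
  let lift : ResidueField O →+* κ := Ideal.Quotient.lift (maximalIdeal O) g h'
  exact Finite.of_injective lift lift.injective

lemma finite_case {K : Type*} [Field K] [Finite K] :
    ∃ O : ValuationSubring K, Finite (ResidueField O) := by
  refine ⟨⊤, ?_⟩
  have : Finite (⊤ : ValuationSubring K) := Subtype.finite
  exact Finite.of_surjective (residue (⊤ : ValuationSubring K)) residue_surjective

section RatCase
variable {K : Type*} [Field K] [CharZero K]

private lemma odd_den_mul {q₁ q₂ : ℚ} (h₁ : ¬(2 ∣ q₁.den)) (h₂ : ¬(2 ∣ q₂.den)) :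
    ¬(2 ∣ (q₁ * q₂).den) := by
  intro h
  rcases (Nat.prime_two.dvd_mul.mp (h.trans (Rat.mul_den_dvd q₁ q₂))) with h' | h'
  exacts [h₁ h', h₂ h']

private lemma odd_den_add {q₁ q₂ : ℚ} (h₁ : ¬(2 ∣ q₁.den)) (h₂ : ¬(2 ∣ q₂.den)) :
    ¬(2 ∣ (q₁ + q₂).den) := by
  intro h
  rcases (Nat.prime_two.dvd_mul.mp (h.trans (Rat.add_den_dvd q₁ q₂))) with h' | h'
  exacts [h₁ h', h₂ h']

/-- the 2-adic valuation subring inside a "copy of ℚ" -/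
def ratSubring (K : Type*) [Field K] [CharZero K] : Subring K where
  carrier := {z | ∃ q : ℚ, ¬(2 ∣ q.den) ∧ (q : K) = z}
  one_mem' := ⟨1, by norm_num, by norm_num⟩
  zero_mem' := ⟨0, by norm_num, by norm_num⟩
  mul_mem' := by
    rintro a b ⟨q₁, h₁, rfl⟩ ⟨q₂, h₂, rfl⟩
    exact ⟨q₁ * q₂, odd_den_mul h₁ h₂, Rat.cast_mul q₁ q₂⟩
  add_mem' := by
    rintro a b ⟨q₁, h₁, rfl⟩ ⟨q₂, h₂, rfl⟩
    exact ⟨q₁ + q₂, odd_den_add h₁ h₂, Rat.cast_add q₁ q₂⟩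
  neg_mem' := by
    rintro a ⟨q, h, rfl⟩
    refine ⟨-q, by rwa [Rat.neg_den], Rat.cast_neg q⟩

private lemma ratio_eq (q : ℚ) (a b : ℤ) (hb : b ≠ 0) (h : q = (a : ℚ) / (b : ℚ)) :
    q.num * b = a * q.den := by
  have hd : (q.den : ℚ) ≠ 0 := by exact_mod_cast q.den_nz
  have hb' : (b : ℚ) ≠ 0 := by exact_mod_cast hb
  rw [← Rat.num_div_den q, div_eq_div_iff hd hb'] at h
  exact_mod_cast h

private lemma odd_cast_one {d : ℕ} (h : ¬(2 ∣ d)) : (d : ZMod 2) = 1 := by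
  have h0 : (d : ZMod 2) ≠ 0 := by
    rwa [Ne, ZMod.natCast_eq_zero_iff]
  revert h0; generalize (d : ZMod 2) = x; revert x; decide

end RatCase

section RatCase2
variable {K : Type*} [Field K] [CharZero K]

private lemma num_odd_of_den_even {q : ℚ} (hd : 2 ∣ q.den) : ¬((2:ℤ) ∣ q.num) := by
  intro h2
  have h2' : (2:ℕ) ∣ q.num.natAbs := by
    rw [← Int.natCast_dvd_natCast (m := 2)]
    exact (Int.dvd_natAbs).mpr h2
  have h1 : (2:ℕ) ∣ 1 := q.reduced ▸ Nat.dvd_gcd h2' hd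
  norm_num at h1

private lemma ratSubring_or (hsurj : ∀ z : K, ∃ q : ℚ, (q : K) = z) (z : K) :
    z ∈ ratSubring K ∨ z⁻¹ ∈ ratSubring K := by
  obtain ⟨q, rfl⟩ := hsurj z
  by_cases hd : (2 ∣ q.den)
  · right
    have hnum := num_odd_of_den_even hd
    have hden : ¬ (2 ∣ q⁻¹.den) := by
      intro h
      apply hnum
      have : ((q⁻¹.den : ℤ)) ∣ q.num := by
        rw [Rat.inv_def]
        exact Rat.den_dvd q.den q.num
      exact dvd_trans (by exact_mod_cast Int.natCast_dvd_natCast.mpr h) this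
    exact ⟨q⁻¹, hden, Rat.cast_inv q⟩
  · exact Or.inl ⟨q, hd, rfl⟩

/-- The 2-adic valuation subring of a field isomorphic to ℚ. -/
noncomputable def ratVS (hsurj : ∀ z : K, ∃ q : ℚ, (q : K) = z) : ValuationSubring K :=
  ValuationSubring.ofSubring (ratSubring K) (ratSubring_or hsurj)

end RatCase2

section RatCase3
variable {K : Type*} [Field K] [CharZero K] (hsurj : ∀ z : K, ∃ q : ℚ, (q : K) = z)

private noncomputable def toQ (z : ratVS hsurj) : ℚ :=
  ((ValuationSubring.mem_ofSubring _ _ _).mp z.2).choose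

private lemma toQ_spec (z : ratVS hsurj) :
    ¬(2 ∣ (toQ hsurj z).den) ∧ ((toQ hsurj z : ℚ) : K) = z :=
  ((ValuationSubring.mem_ofSubring _ _ _).mp z.2).choose_spec

private lemma toQ_eq (z : ratVS hsurj) (q : ℚ) (h : (q : K) = z) : toQ hsurj z = q :=
  Rat.cast_injective ((toQ_spec hsurj z).2.trans h.symm)

private lemma num_cast_eq (q : ℚ) (a b : ℤ) (hb : b ≠ 0) (h : q = (a : ℚ) / (b : ℚ))
    (hd : ¬ 2 ∣ q.den) (hbodd : ((b : ZMod 2)) = 1) : (q.num : ZMod 2) = (a : ZMod 2) := by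
  have key := ratio_eq q a b hb h
  have hden : ((q.den : ℤ) : ZMod 2) = 1 := by
    have := odd_cast_one hd
    push_cast
    exact_mod_cast this
  have := congrArg (fun n : ℤ => (n : ZMod 2)) key
  simp only [Int.cast_mul] at this
  rw [hbodd, mul_one] at this
  rw [this]
  rw [show (((q.den : ℤ)) : ZMod 2) = 1 from hden, mul_one]

private lemma odd_cast_one' {d : ℕ} (h : ¬(2 ∣ d)) : ((d : ℤ) : ZMod 2) = 1 := by
  have := odd_cast_one h
  push_cast
  exact_mod_cast this

private noncomputable def ratResHom : (ratVS hsurj) →+* ZMod 2 :=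
  RingHom.mk'
    { toFun := fun z => ((toQ hsurj z).num : ZMod 2)
      map_one' := by
        show ((toQ hsurj 1).num : ZMod 2) = 1
        rw [toQ_eq hsurj 1 1 (by push_cast; rfl)]
        norm_num
      map_mul' := by
        intro z₁ z₂
        obtain ⟨h₁, e₁⟩ := toQ_spec hsurj z₁
        obtain ⟨h₂, e₂⟩ := toQ_spec hsurj z₂
        obtain ⟨h₁₂, _⟩ := toQ_spec hsurj (z₁ * z₂)
        have e : toQ hsurj (z₁ * z₂) = toQ hsurj z₁ * toQ hsurj z₂ := by
          apply toQ_eq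
          rw [Rat.cast_mul, e₁, e₂]
          rfl
        show ((toQ hsurj (z₁ * z₂)).num : ZMod 2) = _ * _
        rw [e] at h₁₂ ⊢
        have hb : ((toQ hsurj z₁).den : ℤ) * ((toQ hsurj z₂).den : ℤ) ≠ 0 := by
          exact_mod_cast Nat.mul_ne_zero (toQ hsurj z₁).den_nz (toQ hsurj z₂).den_nz
        rw [num_cast_eq (toQ hsurj z₁ * toQ hsurj z₂)
          ((toQ hsurj z₁).num * (toQ hsurj z₂).num)
          (((toQ hsurj z₁).den : ℤ) * ((toQ hsurj z₂).den : ℤ)) hb ?_ h₁₂ ?_]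
        · push_cast; ring
        · push_cast
          rw [← div_mul_div_comm, Rat.num_div_den, Rat.num_div_den]
        · push_cast [odd_cast_one' h₁, odd_cast_one' h₂]
          ring }
    (by
      intro z₁ z₂
      obtain ⟨h₁, e₁⟩ := toQ_spec hsurj z₁
      obtain ⟨h₂, e₂⟩ := toQ_spec hsurj z₂
      obtain ⟨h₁₂, _⟩ := toQ_spec hsurj (z₁ + z₂)
      have e : toQ hsurj (z₁ + z₂) = toQ hsurj z₁ + toQ hsurj z₂ := by
        apply toQ_eq
        rw [Rat.cast_add, e₁, e₂]
        rfl
      show ((toQ hsurj (z₁ + z₂)).num : ZMod 2)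
        = ((toQ hsurj z₁).num : ZMod 2) + ((toQ hsurj z₂).num : ZMod 2)
      rw [e] at h₁₂ ⊢
      set q₁ := toQ hsurj z₁
      set q₂ := toQ hsurj z₂
      have hb : (q₁.den : ℤ) * (q₂.den : ℤ) ≠ 0 := by
        exact_mod_cast Nat.mul_ne_zero q₁.den_nz q₂.den_nz
      rw [num_cast_eq (q₁ + q₂) (q₁.num * (q₂.den : ℤ) + (q₁.den : ℤ) * q₂.num)
        ((q₁.den : ℤ) * (q₂.den : ℤ)) hb ?_ h₁₂ ?_]
      · push_cast [odd_cast_one' h₁, odd_cast_one' h₂]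
        ring
      · push_cast
        rw [← div_add_div _ _ (by exact_mod_cast q₁.den_nz : (q₁.den:ℚ) ≠ 0)
          (by exact_mod_cast q₂.den_nz : (q₂.den:ℚ) ≠ 0), Rat.num_div_den, Rat.num_div_den]
      · push_cast [odd_cast_one' h₁, odd_cast_one' h₂]
        ring)

private lemma ratResHom_unit (z : ratVS hsurj) (hz : ratResHom hsurj z ≠ 0) : IsUnit z := by
  obtain ⟨hden, hcast⟩ := toQ_spec hsurj z
  set q := toQ hsurj z
  have hnum : ¬ ((2:ℤ) ∣ q.num) := by
    intro h
    apply hz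
    exact (ZMod.intCast_zmod_eq_zero_iff_dvd q.num 2).mpr h
  have hq0 : q ≠ 0 := fun h => by simp [h] at hnum
  have hz0 : (z : K) ≠ 0 := by
    rw [← hcast]
    exact Rat.cast_ne_zero.mpr hq0
  have hmem : (z : K)⁻¹ ∈ ratVS hsurj := by
    refine (ValuationSubring.mem_ofSubring _ _ _).mpr ⟨q⁻¹, ?_, by rw [Rat.cast_inv, hcast]⟩
    intro h
    apply hnum
    have hd : ((q⁻¹.den : ℤ)) ∣ q.num := by
      rw [Rat.inv_def]
      exact Rat.den_dvd q.den q.num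
    exact dvd_trans (by exact_mod_cast Int.natCast_dvd_natCast.mpr h) hd
  refine isUnit_iff_exists_inv.mpr ⟨⟨(z : K)⁻¹, hmem⟩, ?_⟩
  exact Subtype.ext (mul_inv_cancel₀ hz0)

end RatCase3

lemma rat_case {K : Type*} [Field K] [CharZero K] (hsurj : ∀ z : K, ∃ q : ℚ, (q : K) = z) :
    ∃ O : ValuationSubring K, Finite (IsLocalRing.ResidueField O) :=
  ⟨ratVS hsurj, finite_residue_of_hom _ (ratResHom hsurj) (ratResHom_unit hsurj)⟩

lemma finite_ext {F K : Type*} [Field F] [Field K] [Algebra F K] [FiniteDimensional F K]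
    (W : ValuationSubring F) (hW : Finite (ResidueField W)) :
    ∃ O : ValuationSubring K, Finite (ResidueField O) := by
  classical
  have hinj : Function.Injective (algebraMap F K) := (algebraMap F K).injective
  set W' : Subring K := W.toSubring.map (algebraMap F K) with hW'
  let e : W ≃+* W' := Subring.equivMapOfInjective _ _ hinj
  haveI : IsLocalRing W' := IsLocalRing.of_surjective' e.toRingHom e.surjective
  obtain ⟨B, hle, hloc⟩ := LocalSubring.exists_le_valuationSubring (LocalSubring.mk W')
  let ι : W →+* B := (Subring.inclusion hle).comp e.toRingHom
  have hι : ∀ w : W, ((ι w : B) : K) = algebraMap F K (w : F) := fun w => by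
    show ((e w : W') : K) = algebraMap F K (w : F)
    exact Subring.coe_equivMapOfInjective_apply _ _ hinj w
  haveI hlocι : IsLocalHom ι := by
    constructor
    intro a ha
    have h1 : IsUnit (Subring.inclusion hle (e a)) := ha
    have h2 : IsUnit (e a) := hloc.1 _ h1
    have h3 := h2.map e.symm.toRingHom
    simpa using h3
  let ρ : ResidueField W →+* ResidueField B := ResidueField.map ι
  letI : Algebra (ResidueField W) (ResidueField B) := ρ.toAlgebra
  refine ⟨B, ?_⟩
  have hcard : ∀ s : Finset (ResidueField B),
      (LinearIndependent (ResidueField W) fun i : s => (i : ResidueField B)) →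
      s.card ≤ Module.finrank F K := by
    intro s hs
    choose x hx using fun i : s => residue_surjective (R := B) (i : ResidueField B)
    have hli : LinearIndependent F fun i : s => ((x i : B) : K) := by
      rw [Fintype.linearIndependent_iff]
      intro g hg
      by_contra hcon
      push_neg at hcon
      obtain ⟨i₀, hi₀⟩ := hcon
      set T : Finset s := Finset.univ.filter (fun i => g i ≠ 0) with hT
      have hTne : T.Nonempty := ⟨i₀, by simp [hT, hi₀]⟩
      obtain ⟨j, hjT, hj⟩ := Finset.exists_max_image T (fun i => W.valuation (g i)) hTne
      have hgj : g j ≠ 0 := by simpa [hT] using hjT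
      have hd : ∀ i : s, g i / g j ∈ W := by
        intro i
        by_cases hgi : g i = 0
        · rw [hgi, zero_div]; exact W.zero_mem
        · apply W.mem_of_valuation_le_one
          rw [map_div₀]
          rw [div_le_one₀ (zero_lt_iff.mpr ((Valuation.ne_zero_iff _).mpr hgj))]
          exact hj i (by simp [hT, hgi])
      have hsum : (∑ i : s, ι ⟨g i / g j, hd i⟩ * x i) = 0 := by
        apply Subtype.coe_injective
        push_cast
        have : ∀ i : s, ((ι ⟨g i / g j, hd i⟩ : B) : K) * ((x i : B) : K)
            = (algebraMap F K (g j))⁻¹ * (g i • ((x i : B) : K)) := by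
          intro i
          rw [hι, Algebra.smul_def, map_div₀]
          field_simp
        rw [Finset.sum_congr rfl (fun i _ => this i), ← Finset.mul_sum, hg, mul_zero]
      have := congrArg (residue B) hsum
      rw [map_sum, map_zero] at this
      have h0 : (∑ i : s, (residue W ⟨g i / g j, hd i⟩) • ((i : ResidueField B))) = 0 := by
        rw [← this]
        refine Finset.sum_congr rfl fun i _ => ?_
        rw [map_mul, hx i, Algebra.smul_def]
        congr 1
      have hzero := (Fintype.linearIndependent_iff.mp hs) _ h0
      have hj0 := hzero j
      rw [show (⟨g j / g j, hd j⟩ : W) = 1 from Subtype.ext (div_self hgj), map_one] at hj0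
      exact one_ne_zero hj0
    calc s.card = Fintype.card s := (Fintype.card_coe s).symm
      _ ≤ Module.finrank F K := hli.fintype_card_le_finrank
  have hrank := rank_le hcard
  haveI : Module.Free (ResidueField W) (ResidueField B) := Module.Free.of_divisionRing _ _
  haveI : Module.Finite (ResidueField W) (ResidueField B) :=
    Module.rank_lt_aleph0_iff.mp (lt_of_le_of_lt hrank (Cardinal.nat_lt_aleph0 _))
  exact Module.finite_of_finite (ResidueField W)

section TransCase
variable {F K : Type*} [Field F] [Field K] [Algebra F K]

private lemma aeval_ne_zero_of_trans {x : K} (htr : Transcendental F x) {q : F[X]}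
    (hq : q ≠ 0) : aeval x q ≠ 0 := fun h => hq (transcendental_iff_injective.mp htr (by simpa using h))

private lemma ne_zero_of_coeff_zero_one {q : F[X]} (hq : q.coeff 0 = 1) : q ≠ 0 := by
  intro h; rw [h] at hq; simp at hq

/-- The composite valuation subring of `F(x)`: elements `p/q` with `q(0) = 1` and `p(0) ∈ W`. -/
def transSubring (x : K) (htr : Transcendental F x) (W : ValuationSubring F) : Subring K where
  carrier := {z | ∃ p q : F[X], q.coeff 0 = 1 ∧ p.coeff 0 ∈ W ∧ z = aeval x p / aeval x q}
  one_mem' := ⟨1, 1, by simp, by simpa using W.one_mem, by simp⟩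
  zero_mem' := ⟨0, 1, by simp, by simpa using W.zero_mem, by simp⟩
  mul_mem' := by
    rintro a b ⟨p₁, q₁, hq₁, hp₁, rfl⟩ ⟨p₂, q₂, hq₂, hp₂, rfl⟩
    refine ⟨p₁ * p₂, q₁ * q₂, by simp [mul_coeff_zero, hq₁, hq₂], ?_, ?_⟩
    · rw [mul_coeff_zero]; exact W.mul_mem _ _ hp₁ hp₂
    · rw [map_mul, map_mul, div_mul_div_comm]
  add_mem' := by
    rintro a b ⟨p₁, q₁, hq₁, hp₁, rfl⟩ ⟨p₂, q₂, hq₂, hp₂, rfl⟩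
    refine ⟨p₁ * q₂ + q₁ * p₂, q₁ * q₂, by simp [coeff_add, mul_coeff_zero, hq₁, hq₂], ?_, ?_⟩
    · rw [coeff_add, mul_coeff_zero, mul_coeff_zero, hq₁, hq₂, mul_one, one_mul]
      exact W.add_mem _ _ hp₁ hp₂
    · rw [map_add, map_mul, map_mul, map_mul,
        div_add_div _ _ (aeval_ne_zero_of_trans htr (ne_zero_of_coeff_zero_one hq₁))
          (aeval_ne_zero_of_trans htr (ne_zero_of_coeff_zero_one hq₂))]
  neg_mem' := by
    rintro a ⟨p, q, hq, hp, rfl⟩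
    exact ⟨-p, q, hq, by simpa using W.neg_mem _ hp, by rw [map_neg, neg_div]⟩

private lemma exists_X_pow_mul : ∀ (n : ℕ) (p : F[X]), p.natDegree ≤ n → p ≠ 0 →
    ∃ (a : ℕ) (r : F[X]), r.coeff 0 ≠ 0 ∧ p = X ^ a * r := by
  intro n
  induction n with
  | zero =>
    intro p hdeg hp
    refine ⟨0, p, ?_, by simp⟩
    intro h0
    apply hp
    have := Polynomial.eq_C_of_natDegree_le_zero hdeg
    rw [this, h0, map_zero]
  | succ n ih =>
    intro p hdeg hp
    by_cases h0 : p.coeff 0 ≠ 0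
    · exact ⟨0, p, h0, by simp⟩
    · push_neg at h0
      obtain ⟨r, hr⟩ := Polynomial.X_dvd_iff.mpr h0
      have hrne : r ≠ 0 := by rintro rfl; simp at hr; exact hp hr
      have hdr : r.natDegree ≤ n := by
        have : p.natDegree = r.natDegree + 1 := by
          rw [hr, natDegree_mul Polynomial.X_ne_zero hrne, natDegree_X]; ring
        omega
      obtain ⟨a, r₀, hr₀, hfac⟩ := ih r hdr hrne
      exact ⟨a + 1, r₀, hr₀, by rw [hr, hfac, pow_succ]; ring⟩

end TransCase
section TransCase2
variable {F K : Type*} [Field F] [Field K] [Algebra F K]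

private lemma transSubring_or (x : K) (htr : Transcendental F x)
    (hadj : ∀ z : K, ∃ p q : F[X], z = aeval x p / aeval x q)
    (W : ValuationSubring F) (z : K) :
    z ∈ transSubring x htr W ∨ z⁻¹ ∈ transSubring x htr W := by
  by_cases hz0 : z = 0
  · left; rw [hz0]; exact (transSubring x htr W).zero_mem
  obtain ⟨p, q, hz⟩ := hadj z
  have hφp : aeval x p ≠ 0 := by intro h; apply hz0; rw [hz, h, zero_div]
  have hφq : aeval x q ≠ 0 := by intro h; apply hz0; rw [hz, h, div_zero]
  have hp : p ≠ 0 := by rintro rfl; simp at hφp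
  have hq : q ≠ 0 := by rintro rfl; simp at hφq
  obtain ⟨a, p₀, hp₀c, hpfac⟩ := exists_X_pow_mul p.natDegree p le_rfl hp
  obtain ⟨b, q₀, hq₀c, hqfac⟩ := exists_X_pow_mul q.natDegree q le_rfl hq
  set c := p₀.coeff 0 with hc
  set d := q₀.coeff 0 with hd
  set p₁ := C c⁻¹ * p₀ with hp₁def
  set q₁ := C d⁻¹ * q₀ with hq₁def
  have hp₁ : p₁.coeff 0 = 1 := by
    rw [hp₁def, mul_coeff_zero, coeff_C_zero, inv_mul_cancel₀ hp₀c]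
  have hq₁ : q₁.coeff 0 = 1 := by
    rw [hq₁def, mul_coeff_zero, coeff_C_zero, inv_mul_cancel₀ hq₀c]
  have hx : x ≠ 0 := by
    rintro rfl
    exact htr isAlgebraic_zero
  have hφp₁ : aeval x p₁ ≠ 0 := aeval_ne_zero_of_trans htr (ne_zero_of_coeff_zero_one hp₁)
  have hφq₁ : aeval x q₁ ≠ 0 := aeval_ne_zero_of_trans htr (ne_zero_of_coeff_zero_one hq₁)
  have hcK : algebraMap F K c ≠ 0 := fun h => hp₀c ((algebraMap F K).injective (by simpa using h))
  have hdK : algebraMap F K d ≠ 0 := fun h => hq₀c ((algebraMap F K).injective (by simpa using h))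
  have hz' : z = ((algebraMap F K c) * x ^ a * aeval x p₁) /
      ((algebraMap F K d) * x ^ b * aeval x q₁) := by
    rw [hz, hpfac, hqfac]
    have e₁ : aeval x p₀ = algebraMap F K c * aeval x p₁ := by
      rw [hp₁def, map_mul, aeval_C, ← mul_assoc, ← map_mul, mul_inv_cancel₀ hp₀c, map_one, one_mul]
    have e₂ : aeval x q₀ = algebraMap F K d * aeval x q₁ := by
      rw [hq₁def, map_mul, aeval_C, ← mul_assoc, ← map_mul, mul_inv_cancel₀ hq₀c, map_one, one_mul]
    rw [map_mul, map_mul, e₁, e₂, map_pow, map_pow, aeval_X]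
    ring
  rcases lt_trichotomy a b with hab | hab | hab
  · -- a < b : z⁻¹ ∈ O with numerator divisible by X
    right
    refine ⟨C (d / c) * (X ^ (b - a) * q₁), p₁, hp₁, ?_, ?_⟩
    · rw [mul_coeff_zero, mul_coeff_zero, coeff_X_pow]
      simp only [show ¬(0 = b - a) by omega, if_false, zero_mul, mul_zero]
      exact W.zero_mem
    · rw [hz']
      simp only [map_mul, map_pow, aeval_C, aeval_X, map_div₀]
      have hpow : x ^ b = x ^ a * x ^ (b - a) := by rw [← pow_add]; congr 1; omega
      rw [hpow]
      field_simp
  · -- a = b : depends on c/d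
    subst hab
    rcases W.mem_or_inv_mem (c / d) with he | he
    · left
      refine ⟨C (c / d) * p₁, q₁, hq₁, ?_, ?_⟩
      · rw [mul_coeff_zero, coeff_C_zero, hp₁, mul_one]; exact he
      · rw [hz']
        simp only [map_mul, map_pow, aeval_C, aeval_X, map_div₀]
        field_simp
    · right
      rw [inv_div] at he
      refine ⟨C (d / c) * q₁, p₁, hp₁, ?_, ?_⟩
      · rw [mul_coeff_zero, coeff_C_zero, hq₁, mul_one]; exact he
      · rw [hz']
        simp only [map_mul, map_pow, aeval_C, aeval_X, map_div₀]
        field_simp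
  · -- b < a : z ∈ O with numerator divisible by X
    left
    refine ⟨C (c / d) * (X ^ (a - b) * p₁), q₁, hq₁, ?_, ?_⟩
    · rw [mul_coeff_zero, mul_coeff_zero, coeff_X_pow]
      simp only [show ¬(0 = a - b) by omega, if_false, zero_mul, mul_zero]
      exact W.zero_mem
    · rw [hz']
      simp only [map_mul, map_pow, aeval_C, aeval_X, map_div₀]
      have hpow : x ^ a = x ^ b * x ^ (a - b) := by rw [← pow_add]; congr 1; omega
      rw [hpow]
      field_simp

end TransCase2

section TransCaseW
variable {F K : Type*} [Field F] [Field K] [Algebra F K]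

private lemma coeff_zero_welldef (x : K) (htr : Transcendental F x) {p q p' q' : F[X]} (hq : q.coeff 0 = 1) (hq' : q'.coeff 0 = 1)
    (h : aeval x p / aeval x q = aeval x p' / aeval x q') : p.coeff 0 = p'.coeff 0 := by
  have h1 : aeval x q ≠ 0 := aeval_ne_zero_of_trans htr (ne_zero_of_coeff_zero_one hq)
  have h2 : aeval x q' ≠ 0 := aeval_ne_zero_of_trans htr (ne_zero_of_coeff_zero_one hq')
  rw [div_eq_div_iff h1 h2] at h
  have h3 : p * q' = p' * q := transcendental_iff_injective.mp htr
    (show aeval x (p * q') = aeval x (p' * q) by rw [map_mul, map_mul]; exact h)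
  have h4 := congrArg (fun r : F[X] => r.coeff 0) h3
  simpa [mul_coeff_zero, hq, hq'] using h4

end TransCaseW

section TransCase3
variable {F K : Type*} [Field F] [Field K] [Algebra F K]
variable (x : K) (htr : Transcendental F x)
  (hadj : ∀ z : K, ∃ p q : F[X], z = aeval x p / aeval x q)
  (W : ValuationSubring F)

/-- Composite valuation subring of a simple transcendental extension. -/
noncomputable def transVS : ValuationSubring K :=
  ValuationSubring.ofSubring (transSubring x htr W) (transSubring_or x htr hadj W)

private noncomputable def repP (z : transVS x htr hadj W) : F[X] :=
  ((ValuationSubring.mem_ofSubring _ _ _).mp z.2).choose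

private noncomputable def repQ (z : transVS x htr hadj W) : F[X] :=
  ((ValuationSubring.mem_ofSubring _ _ _).mp z.2).choose_spec.choose

private lemma rep_spec (z : transVS x htr hadj W) :
    (repQ x htr hadj W z).coeff 0 = 1 ∧ (repP x htr hadj W z).coeff 0 ∈ W ∧
      (z : K) = aeval x (repP x htr hadj W z) / aeval x (repQ x htr hadj W z) :=
  ((ValuationSubring.mem_ofSubring _ _ _).mp z.2).choose_spec.choose_spec

private lemma ct_eq (z : transVS x htr hadj W) {p q : F[X]} (hq : q.coeff 0 = 1)
    (hzeq : (z : K) = aeval x p / aeval x q) :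
    (repP x htr hadj W z).coeff 0 = p.coeff 0 :=
  coeff_zero_welldef x htr (rep_spec x htr hadj W z).1 hq
    ((rep_spec x htr hadj W z).2.2.symm.trans hzeq)

private noncomputable def transResHom : (transVS x htr hadj W) →+* ResidueField W :=
  RingHom.mk'
    { toFun := fun z => residue W ⟨(repP x htr hadj W z).coeff 0, (rep_spec x htr hadj W z).2.1⟩
      map_one' := by
        show residue W ⟨(repP x htr hadj W 1).coeff 0, (rep_spec x htr hadj W 1).2.1⟩ = 1
        have h1 : (⟨(repP x htr hadj W 1).coeff 0, (rep_spec x htr hadj W 1).2.1⟩ : W) = 1 := by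
          apply Subtype.ext
          show (repP x htr hadj W 1).coeff 0 = ((1 : W) : F)
          rw [ct_eq x htr hadj W 1 (q := 1) (p := 1) (by simp) (by simp)]
          simp
        rw [h1, map_one]
      map_mul' := by
        intro z₁ z₂
        show residue W _ = residue W _ * residue W _
        rw [← map_mul]
        congr 1
        apply Subtype.ext
        show (repP x htr hadj W (z₁ * z₂)).coeff 0
          = (repP x htr hadj W z₁).coeff 0 * (repP x htr hadj W z₂).coeff 0
        obtain ⟨ha₁, hb₁, he₁⟩ := rep_spec x htr hadj W z₁
        obtain ⟨ha₂, hb₂, he₂⟩ := rep_spec x htr hadj W z₂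
        rw [ct_eq x htr hadj W (z₁ * z₂)
          (q := repQ x htr hadj W z₁ * repQ x htr hadj W z₂)
          (p := repP x htr hadj W z₁ * repP x htr hadj W z₂)
          (by rw [mul_coeff_zero, ha₁, ha₂, mul_one])
          (by push_cast [he₁, he₂]; rw [map_mul, map_mul, div_mul_div_comm])]
        rw [mul_coeff_zero] }
    (by
      intro z₁ z₂
      show residue W _ = residue W _ + residue W _
      rw [← map_add]
      congr 1
      apply Subtype.ext
      show (repP x htr hadj W (z₁ + z₂)).coeff 0
        = (repP x htr hadj W z₁).coeff 0 + (repP x htr hadj W z₂).coeff 0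
      obtain ⟨ha₁, hb₁, he₁⟩ := rep_spec x htr hadj W z₁
      obtain ⟨ha₂, hb₂, he₂⟩ := rep_spec x htr hadj W z₂
      rw [ct_eq x htr hadj W (z₁ + z₂)
        (q := repQ x htr hadj W z₁ * repQ x htr hadj W z₂)
        (p := repP x htr hadj W z₁ * repQ x htr hadj W z₂
          + repQ x htr hadj W z₁ * repP x htr hadj W z₂)
        (by rw [mul_coeff_zero, ha₁, ha₂, mul_one])
        (by
          push_cast [he₁, he₂]
          rw [map_add, map_mul, map_mul, map_mul,
            div_add_div _ _ (aeval_ne_zero_of_trans htr (ne_zero_of_coeff_zero_one ha₁))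
              (aeval_ne_zero_of_trans htr (ne_zero_of_coeff_zero_one ha₂))])]
      rw [coeff_add, mul_coeff_zero, mul_coeff_zero, ha₁, ha₂, mul_one, one_mul])

private lemma transResHom_unit (z : transVS x htr hadj W)
    (hz : transResHom x htr hadj W z ≠ 0) : IsUnit z := by
  obtain ⟨ha, hb, he⟩ := rep_spec x htr hadj W z
  set c := (repP x htr hadj W z).coeff 0 with hcdef
  have hcW : (⟨c, hb⟩ : W) ∉ maximalIdeal W := by
    intro hmem
    exact hz (Ideal.Quotient.eq_zero_iff_mem.mpr hmem)
  have hcunit : IsUnit (⟨c, hb⟩ : W) := by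
    by_contra hnu
    exact hcW ((mem_maximalIdeal _).mpr hnu)
  obtain ⟨u, hu⟩ := hcunit
  set w : F := ((u⁻¹ : Wˣ) : W).1 with hwdef
  have hwc : w * c = 1 := by
    have h2 : ((u⁻¹ : Wˣ) : W) * ⟨c, hb⟩ = 1 := by
      rw [← hu, ← Units.val_mul, inv_mul_cancel, Units.val_one]
    exact congrArg Subtype.val h2
  have hc0 : c ≠ 0 := by
    intro h0
    rw [h0, mul_zero] at hwc
    exact zero_ne_one hwc
  have hw0 : w ≠ 0 := by
    intro h0
    rw [h0, zero_mul] at hwc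
    exact zero_ne_one hwc
  have hpne : aeval x (repP x htr hadj W z) ≠ 0 := by
    apply aeval_ne_zero_of_trans htr
    intro h0
    rw [h0] at hcdef
    exact hc0 (by simp [hcdef])
  have hqne : aeval x (repQ x htr hadj W z) ≠ 0 :=
    aeval_ne_zero_of_trans htr (ne_zero_of_coeff_zero_one ha)
  have hz0 : (z : K) ≠ 0 := by
    rw [he]
    exact div_ne_zero hpne hqne
  have hmem : (z : K)⁻¹ ∈ transVS x htr hadj W := by
    refine (ValuationSubring.mem_ofSubring _ _ _).mpr
      ⟨C w * repQ x htr hadj W z, C w * repP x htr hadj W z, ?_, ?_, ?_⟩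
    · rw [mul_coeff_zero, coeff_C_zero, ← hcdef, hwc]
    · rw [mul_coeff_zero, coeff_C_zero, ha, mul_one]
      exact ((u⁻¹ : Wˣ) : W).2
    · rw [he, inv_div, map_mul, map_mul, aeval_C]
      have : algebraMap F K w ≠ 0 :=
        fun h => hw0 ((algebraMap F K).injective (by simpa using h))
      rw [mul_div_mul_left _ _ this]
  refine isUnit_iff_exists_inv.mpr ⟨⟨(z : K)⁻¹, hmem⟩, Subtype.ext (mul_inv_cancel₀ hz0)⟩

end TransCase3

lemma trans_case {F K : Type*} [Field F] [Field K] [Algebra F K]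
    (x : K) (htr : Transcendental F x)
    (hadj : ∀ z : K, ∃ p q : F[X], z = aeval x p / aeval x q)
    (W : ValuationSubring F) (hW : Finite (ResidueField W)) :
    ∃ O : ValuationSubring K, Finite (ResidueField O) :=
  ⟨transVS x htr hadj W,
    finite_residue_of_hom _ (transResHom x htr hadj W) (transResHom_unit x htr hadj W)⟩


lemma map_closure_subfield {K L : Type*} [Field K] [Field L] (f : K →+* L) (s : Set K) :
    (Subfield.closure s).map f = Subfield.closure (f '' s) := by
  apply le_antisymm
  · rw [Subfield.map_le_iff_le_comap, Subfield.closure_le]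
    intro a ha
    exact Subfield.subset_closure (Set.mem_image_of_mem f ha)
  · rw [Subfield.closure_le]
    rintro b ⟨a, ha, rfl⟩
    exact ⟨a, Subfield.subset_closure ha, rfl⟩

lemma char_p_case {K : Type*} [Field K] {p : ℕ} (hp : p.Prime) [CharP K p]
    (hclos : (⊥ : Subfield K) = ⊤) : ∃ O : ValuationSubring K, Finite (ResidueField O) := by
  haveI : Fact p.Prime := ⟨hp⟩
  let f : ZMod p →+* K := ZMod.castHom (dvd_refl p) K
  have hsurj : Function.Surjective f := by
    intro z
    have hz : z ∈ f.fieldRange := by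
      have : (⊤ : Subfield K) ≤ f.fieldRange := by rw [← hclos]; exact bot_le
      exact this trivial
    obtain ⟨q, hq⟩ := hz
    exact ⟨q, hq⟩
  haveI : Finite K := Finite.of_surjective f hsurj
  exact finite_case

universe u

lemma aux_induction : ∀ (n : ℕ) (K : Type u) [Field K], ∀ s : Finset K,
    s.card ≤ n → Subfield.closure (s : Set K) = ⊤ →
    ∃ O : ValuationSubring K, Finite (ResidueField O) := by
  intro n
  induction n with
  | zero =>
    intro K _ s hcard hclos
    have hse : s = ∅ := Finset.card_eq_zero.mp (Nat.le_zero.mp hcard)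
    subst hse
    rw [Finset.coe_empty, Subfield.closure_empty] at hclos
    obtain ⟨p, hchar⟩ := CharP.exists K
    rcases CharP.char_is_prime_or_zero K p with hp | hp
    · exact char_p_case hp hclos
    · subst hp
      haveI : CharZero K := CharP.charP_to_charZero K
      apply rat_case
      intro z
      have hz : z ∈ (Rat.castHom K).fieldRange := by
        have : (⊤ : Subfield K) ≤ (Rat.castHom K).fieldRange := by rw [← hclos]; exact bot_le
        exact this trivial
      obtain ⟨q, hq⟩ := hz
      exact ⟨q, hq⟩
  | succ n ih =>
    intro K _ s hcard hclos
    classical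
    rcases s.eq_empty_or_nonempty with hse | ⟨x, hx⟩
    · exact ih K s (by simp [hse]) hclos
    set s' : Finset K := s.erase x with hs'def
    set F : Subfield K := Subfield.closure (s' : Set K) with hFdef
    -- the generating finset inside F
    set t : Finset F := s'.attach.image
      (fun y => (⟨y.1, Subfield.subset_closure y.2⟩ : F)) with htdef
    have htcard : t.card ≤ n := by
      calc t.card ≤ s'.attach.card := Finset.card_image_le
        _ = s'.card := Finset.card_attach
        _ = s.card - 1 := by rw [hs'def, Finset.card_erase_of_mem hx]
        _ ≤ n := by omega
    have htclos : Subfield.closure (t : Set F) = ⊤ := by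
      rw [eq_top_iff]
      intro z _
      have himg : (F.subtype) '' (t : Set F) = (s' : Set K) := by
        ext w
        constructor
        · rintro ⟨v, hv, rfl⟩
          simp only [htdef, Finset.coe_image, Set.mem_image, Finset.mem_coe,
            Finset.mem_attach] at hv
          obtain ⟨y, -, rfl⟩ := hv
          exact y.2
        · intro hw
          exact ⟨⟨w, Subfield.subset_closure hw⟩, by
            simp only [htdef, Finset.coe_image, Set.mem_image, Finset.mem_coe]
            exact ⟨⟨w, hw⟩, Finset.mem_attach _ _, rfl⟩, rfl⟩
      have hzmem : (z : K) ∈ (Subfield.closure (t : Set F)).map F.subtype := by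
        rw [map_closure_subfield, himg, ← hFdef]
        exact z.2
      obtain ⟨m, hm, hmz⟩ := Subfield.mem_map.mp hzmem
      have : m = z := Subtype.ext hmz
      rwa [← this]
    obtain ⟨W, hW⟩ := ih F t htcard htclos
    -- K = F⟮x⟯
    have htop : IntermediateField.adjoin F {x} = ⊤ := by
      rw [eq_top_iff]
      intro z _
      have hle : Subfield.closure (s : Set K) ≤ (IntermediateField.adjoin F {x}).toSubfield := by
        rw [Subfield.closure_le]
        intro y hy
        rcases eq_or_ne y x with rfl | hyx
        · exact IntermediateField.mem_adjoin_simple_self F y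
        · have hy' : y ∈ s' := Finset.mem_erase.mpr ⟨hyx, hy⟩
          have : y ∈ F := Subfield.subset_closure hy'
          exact (IntermediateField.adjoin F {x}).algebraMap_mem ⟨y, this⟩
      rw [hclos] at hle
      exact hle trivial
    by_cases halg : IsAlgebraic F x
    · haveI h1 : FiniteDimensional F (IntermediateField.adjoin F {x}) :=
        IntermediateField.adjoin.finiteDimensional halg.isIntegral
      rw [htop] at h1
      haveI : FiniteDimensional F K :=
        Module.Finite.equiv IntermediateField.topEquiv.toLinearEquiv
      exact finite_ext W hW
    · have htr : Transcendental F x := halg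
      have hadj : ∀ z : K, ∃ p q : F[X], z = aeval x p / aeval x q := by
        intro z
        have : z ∈ IntermediateField.adjoin F {x} := htop ▸ trivial
        exact (IntermediateField.mem_adjoin_simple_iff F z).mp this
      exact trans_case x htr hadj W hW

/-- **Finitely generated fields admit valuations with finite residue field** (Lemma 4.1).

If `K` is a finitely generated field (generated as a field by finitely many elements over its
prime field), then there is a valuation subring `O` of `K` whose residue field is finite. -/
theorem exists_valuationSubring_finite_residueField
    (K : Type*) [Field K]
    (hfg : ∃ s : Finset K, Subfield.closure (s : Set K) = ⊤) :
    ∃ O : ValuationSubring K, Finite (IsLocalRing.ResidueField O) := by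
  obtain ⟨s, hs⟩ := hfg
  exact aux_induction s.card K s le_rfl hs
end

section
/- Let p be a prime and let ℘(x) := x^p − x be the Artin-Schreier map on 𝔽_p(t). For any two distinct positive integers a, b not divisible by p, the element t^b − t^a does not belong to ℘(𝔽_p(t)); equivalently, the elements t^a for a ∈ ℕ ∖ pℕ lie in pairwise distinct additive cosets of ℘(𝔽_p(t)). -/
open Polynomial

lemma as_key (p : ℕ) [Fact p.Prime] (a b : ℕ) (hab : a < b) (hpb : ¬ p ∣ b) :
    ¬ ∃ y : RatFunc (ZMod p),
        (RatFunc.X : RatFunc (ZMod p)) ^ b - RatFunc.X ^ a = y ^ p - y := by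
  rintro ⟨y, hy⟩
  have hp2 : 2 ≤ p := (Fact.out : p.Prime).two_le
  set P : Polynomial (ZMod p) := X ^ b - X ^ a with hPdef
  have hP : (algebraMap (Polynomial (ZMod p)) (RatFunc (ZMod p))) P
      = RatFunc.X ^ b - RatFunc.X ^ a := by
    simp [hPdef, RatFunc.algebraMap_X]
  set n := y.num with hn
  set d := y.denom with hd
  have hd0 : (algebraMap (Polynomial (ZMod p)) (RatFunc (ZMod p))) d ≠ 0 :=
    RatFunc.algebraMap_ne_zero (RatFunc.denom_ne_zero y)
  have hy' : y = algebraMap _ _ n / algebraMap _ _ d := (RatFunc.num_div_denom y).symm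
  set A := algebraMap (Polynomial (ZMod p)) (RatFunc (ZMod p)) with hA
  have hpp : p - 1 + 1 = p := by omega
  have hdp : (A d) ^ p = (A d) ^ (p-1) * (A d) := by rw [← pow_succ, hpp]
  have h1 : (A n) ^ p = y ^ p * (A d) ^ p := by
    rw [hy', div_pow, div_mul_cancel₀ _ (pow_ne_zero p hd0)]
  have h2 : (A n) * (A d) ^ (p-1) = y * (A d) ^ p := by
    rw [hy', hdp, div_mul_eq_mul_div, mul_div_assoc, mul_div_assoc, div_self hd0, mul_one]
  have key : A (n ^ p - n * d ^ (p-1)) = A (P * d ^ p) := by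
    rw [map_sub, map_mul, map_mul, map_pow, map_pow, map_pow, hP, hy, h1, h2, ← sub_mul]
  have keyP : n ^ p - n * d ^ (p-1) = P * d ^ p := RatFunc.algebraMap_injective _ key
  -- d divides n^p
  have hdvd : d ∣ n ^ p := by
    have : n ^ p = P * d ^ p + n * d ^ (p-1) := by linear_combination keyP
    rw [this]
    exact dvd_add (Dvd.dvd.mul_left (dvd_pow_self d (by omega)) P)
      (Dvd.dvd.mul_left (dvd_pow_self d (by omega)) n)
  have hcop : IsCoprime d (n ^ p) := (RatFunc.isCoprime_num_denom y).symm.pow_right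
  have hd1 : d = 1 := (RatFunc.monic_denom y).eq_one_of_isUnit (hcop.isUnit_of_dvd' dvd_rfl hdvd)
  -- so y is a polynomial, and P = n^p - n
  have hPn : P = n ^ p - n := by
    have := keyP
    rw [hd1] at this
    simpa using this.symm
  -- degrees
  have hdegP : P.natDegree = b := by
    rw [hPdef]
    rw [natDegree_sub_eq_left_of_natDegree_lt] <;> simp [hab]
  have hn0 : n.natDegree ≠ 0 := by
    intro h0
    have : n = C (n.coeff 0) := eq_C_of_natDegree_eq_zero h0
    rw [hPn, this, ← C_pow, ← C_sub, ZMod.pow_card, sub_self, map_zero] at hdegP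
    simp at hdegP
    omega
  have hdeg2 : (n ^ p - n).natDegree = p * n.natDegree := by
    rw [natDegree_sub_eq_left_of_natDegree_lt, natDegree_pow]
    rw [natDegree_pow]
    nlinarith [Nat.pos_of_ne_zero hn0]
  rw [hPn, hdeg2] at hdegP
  exact hpb ⟨n.natDegree, hdegP.symm⟩

/-- **Distinct Artin–Schreier cosets** (the computation in the first Claim of the proof of
Proposition 4.3).

Let `p` be a prime and `℘(x) = x^p - x` the Artin–Schreier map on `𝔽_p(t)`.  For any two
distinct positive integers `a`, `b` not divisible by `p`, the element `t^b - t^a` does not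
belong to `℘(𝔽_p(t))`; equivalently, the `t^a` for `a ∈ ℕ ∖ pℕ` lie in pairwise distinct
additive cosets of `℘(𝔽_p(t))`. -/
theorem pow_sub_pow_not_mem_artin_schreier_image (p : ℕ) [Fact p.Prime]
    (a b : ℕ) (ha : 0 < a) (hb : 0 < b) (hab : a ≠ b) (hpa : ¬ p ∣ a) (hpb : ¬ p ∣ b) :
    ¬ ∃ y : RatFunc (ZMod p),
        (RatFunc.X : RatFunc (ZMod p)) ^ b - RatFunc.X ^ a = y ^ p - y := by
  rcases hab.lt_or_gt with h | h
  · exact as_key p a b h hpb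
  · rintro ⟨y, hy⟩
    refine as_key p b a h hpa ⟨-y, ?_⟩
    haveI : CharP (RatFunc (ZMod p)) p :=
      charP_of_injective_algebraMap' (ZMod p) (A := RatFunc (ZMod p)) p
    have hfrob : (-y) ^ p = -(y ^ p) := by
      rw [neg_eq_neg_one_mul, mul_pow, neg_one_pow_char, neg_one_mul]
    rw [hfrob]
    linear_combination -hy
end

section
/- Let P be a finite set of points in the real plane ℝ² and let L be a finite set of (affine) lines in ℝ². Then the number of incidences satisfies |{ (p, l) ∈ P × L : p ∈ l }| ≤ 4|P|^{2/3}|L|^{2/3} + 4|P| + |L|. -/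
noncomputable section
open Classical

namespace STproof

abbrev Pt := ℝ × ℝ
abbrev Edge := Pt × Pt

/-- height of the segment `e` above abscissa `x` (affine interpolation). -/
def hgt (e : Edge) (x : ℝ) : ℝ :=
  e.1.2 + (x - e.1.1) * ((e.2.2 - e.1.2) / (e.2.1 - e.1.1))

lemma hgt_left (e : Edge) : hgt e e.1.1 = e.1.2 := by simp [hgt]

lemma hgt_right (e : Edge) (h : e.1.1 ≠ e.2.1) : hgt e e.2.1 = e.2.2 := by
  have h' : e.2.1 - e.1.1 ≠ 0 := sub_ne_zero.mpr (Ne.symm h)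
  rw [hgt, mul_div_assoc', mul_div_cancel_left₀ _ h']; ring

/-- `hgt` is affine in `x`. -/
lemma hgt_affine (e : Edge) : ∃ α β : ℝ, ∀ x, hgt e x = α + β * x := by
  refine ⟨e.1.2 - e.1.1 * ((e.2.2 - e.1.2) / (e.2.1 - e.1.1)),
    (e.2.2 - e.1.2) / (e.2.1 - e.1.1), fun x => ?_⟩
  simp [hgt]; ring

/-- An affine function positive at `a` and negative at `b` has a root strictly between. -/
lemma affine_sign_change {α β a b : ℝ} (hab : a < b)
    (ha : 0 < α + β * a) (hb : α + β * b < 0) :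
    ∃ x, a < x ∧ x < b ∧ α + β * x = 0 := by
  have hβ : β < 0 := by nlinarith
  refine ⟨-α / β, ?_, ?_, ?_⟩
  · rw [lt_div_iff_of_neg hβ]; nlinarith
  · rw [div_lt_iff_of_neg hβ]; nlinarith
  · have : β ≠ 0 := ne_of_lt hβ
    field_simp
    ring

/-- Core persistence lemma: two non-crossing segments cannot strictly swap their
vertical order between two abscissas contained in both (closed) spans. -/
lemma persistence {u v : Edge} {a b : ℝ} (hab : a < b)
    (hua : u.1.1 ≤ a) (hub : b ≤ u.2.1) (hva : v.1.1 ≤ a) (hvb : b ≤ v.2.1)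
    (hcr : ∀ x, u.1.1 < x → x < u.2.1 → v.1.1 < x → x < v.2.1 → hgt u x ≠ hgt v x)
    (h1 : hgt u a < hgt v a) (h2 : hgt v b < hgt u b) : False := by
  obtain ⟨αu, βu, hu⟩ := hgt_affine u
  obtain ⟨αv, βv, hv⟩ := hgt_affine v
  have ha' : 0 < (αv - αu) + (βv - βu) * a := by
    have := h1; rw [hu, hv] at this; nlinarith
  have hb' : (αv - αu) + (βv - βu) * b < 0 := by
    have := h2; rw [hu, hv] at this; nlinarith
  obtain ⟨x, hax, hxb, hx⟩ := affine_sign_change hab ha' hb'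
  refine hcr x (lt_of_le_of_lt hua hax) (lt_of_lt_of_le hxb hub)
    (lt_of_le_of_lt hva hax) (lt_of_lt_of_le hxb hvb) ?_
  rw [hu, hv]; nlinarith


/-- A crossing-free configuration of segments over a vertex set with distinct abscissas. -/
structure Config where
  V : Finset Pt
  E : Finset Edge
  hx : ∀ p ∈ V, ∀ q ∈ V, p.1 = q.1 → p = q
  he1 : ∀ e ∈ E, e.1 ∈ V
  he2 : ∀ e ∈ E, e.2 ∈ V
  hlt : ∀ e ∈ E, e.1.1 < e.2.1
  hin : ∀ e ∈ E, ∀ w ∈ V, e.1.1 < w.1 → w.1 < e.2.1 → hgt e w.1 ≠ w.2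
  hcr : ∀ e ∈ E, ∀ f ∈ E, e ≠ f → ∀ x, e.1.1 < x → x < e.2.1 → f.1.1 < x → x < f.2.1 →
          hgt e x ≠ hgt f x

namespace Config

variable (C : Config)

/-- Edges alive after processing vertex set `K`. -/
def alive (K : Finset Pt) : Finset Edge := C.E.filter (fun e => e.1 ∈ K ∧ e.2 ∉ K)

/-- Good pairs: ordered pairs of alive edges with the same left endpoint that are
adjacent in the vertical order at abscissa `ξ`. -/
def GP (K : Finset Pt) (ξ : ℝ) : Finset (Edge × Edge) :=
  ((C.alive K) ×ˢ (C.alive K)).filter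
    (fun p => p.1.1 = p.2.1 ∧ hgt p.1 ξ < hgt p.2 ξ ∧
      ∀ g ∈ C.alive K, ¬(hgt p.1 ξ < hgt g ξ ∧ hgt g ξ < hgt p.2 ξ))

/-- The potential: number of good pairs, measured at the abscissa of the next vertex. -/
def Dk (K : Finset Pt) : ℕ :=
  if h : (C.V \ K).Nonempty then
    (C.GP K (((C.V \ K).image Prod.fst).min' (h.image _))).card
  else 0

lemma Dk_eq {K : Finset Pt} (q0 : Pt) (hq0 : q0 ∈ C.V \ K)
    (hmin : ∀ v ∈ C.V \ K, q0.1 ≤ v.1) : C.Dk K = (C.GP K q0.1).card := by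
  have h : (C.V \ K).Nonempty := ⟨q0, hq0⟩
  rw [Dk, dif_pos h]
  congr 1
  have h1 : ((C.V \ K).image Prod.fst).min' (h.image _) = q0.1 := by
    apply le_antisymm
    · exact Finset.min'_le _ _ (Finset.mem_image_of_mem _ hq0)
    · apply Finset.le_min'
      intro y hy
      obtain ⟨v, hv, rfl⟩ := Finset.mem_image.mp hy
      exact hmin v hv
  rw [h1]

lemma Dk_empty {K : Finset Pt} (h : C.V \ K = ∅) : C.Dk K = 0 := by
  rw [Dk, dif_neg]; simp [h]

lemma alive_subset {K : Finset Pt} : C.alive K ⊆ C.E := Finset.filter_subset _ _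

/-- Interior injectivity: equal heights at a common interior abscissa forces equality. -/
lemma hgt_inj {u v : Edge} (hu : u ∈ C.E) (hv : v ∈ C.E) {x : ℝ}
    (h1 : u.1.1 < x) (h2 : x < u.2.1) (h3 : v.1.1 < x) (h4 : x < v.2.1)
    (h : hgt u x = hgt v x) : u = v := by
  by_contra hne
  exact C.hcr u hu v hv hne x h1 h2 h3 h4 h



/-- The key step of the sweep: processing one vertex. -/
lemma step (C : Config) {K₀ : Finset Pt} (hK₀V : K₀ ⊆ C.V) {q : Pt} (hqV : q ∈ C.V)
    (hqK : q ∉ K₀) (hdown : ∀ k ∈ K₀, k.1 < q.1)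
    (hmin : ∀ v ∈ C.V, v ∉ K₀ → v ≠ q → q.1 < v.1) :
    (C.E.filter (fun e => e.1 = q)).card + C.Dk K₀ ≤ C.Dk (insert q K₀) + 3 := by
  set K' := insert q K₀ with hK'
  set I : Finset Edge := C.E.filter (fun e => e.1 = q) with hIdef
  -- basic facts about I
  have hI_alive : ∀ e ∈ I, e ∈ C.alive K' := by
    intro e he
    rw [hIdef, Finset.mem_filter] at he
    obtain ⟨heE, he1⟩ := he
    rw [Config.alive, Finset.mem_filter]
    refine ⟨heE, by rw [he1]; exact Finset.mem_insert_self _ _, ?_⟩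
    intro h2
    rcases Finset.mem_insert.mp h2 with h | h
    · have := C.hlt e heE; rw [he1, h] at this; exact lt_irrefl _ this
    · have h3 := hdown _ h
      have h4 := C.hlt e heE
      rw [he1] at h4; exact lt_asymm h3 h4
  by_cases hW : (C.V \ K').Nonempty
  case neg =>
    -- last vertex: I is empty and Dk K₀ = 0
    have hVK' : ∀ v ∈ C.V, v ∈ K' := by
      intro v hv
      by_contra hc
      exact hW ⟨v, Finset.mem_sdiff.mpr ⟨hv, hc⟩⟩
    have hIe : I = ∅ := by
      rw [Finset.eq_empty_iff_forall_notMem]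
      intro e he
      have := hI_alive e he
      rw [Config.alive, Finset.mem_filter] at this
      exact this.2.2 (hVK' _ (C.he2 e this.1))
    have hDK' : C.Dk K' = 0 := by
      apply C.Dk_empty
      rw [Finset.eq_empty_iff_forall_notMem]
      intro v hv
      rw [Finset.mem_sdiff] at hv
      exact hv.2 (hVK' _ hv.1)
    have hDK₀ : C.Dk K₀ = 0 := by
      have hq0 : q ∈ C.V \ K₀ := Finset.mem_sdiff.mpr ⟨hqV, hqK⟩
      have hminq : ∀ v ∈ C.V \ K₀, q.1 ≤ v.1 := by
        intro v hv
        rw [Finset.mem_sdiff] at hv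
        by_cases hvq : v = q
        · rw [hvq]
        · exact le_of_lt (hmin v hv.1 hv.2 hvq)
      rw [C.Dk_eq q hq0 hminq]
      have : C.GP K₀ q.1 = ∅ := by
        rw [Finset.eq_empty_iff_forall_notMem]
        intro p hp
        rw [Config.GP, Finset.mem_filter, Finset.mem_product] at hp
        obtain ⟨⟨hp1, hp2⟩, _, hord, _⟩ := hp
        -- both components end at q, so both heights are q.2
        have key : ∀ e ∈ C.alive K₀, hgt e q.1 = q.2 := by
          intro e he
          rw [Config.alive, Finset.mem_filter] at he
          have he2 : e.2 ∈ K' := hVK' _ (C.he2 e he.1)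
          rcases Finset.mem_insert.mp he2 with h | h
          · have := hgt_right e (ne_of_lt (C.hlt e he.1))
            rw [h] at this; exact this
          · exact absurd h he.2.2
        rw [key _ hp1, key _ hp2] at hord
        exact lt_irrefl _ hord
      rw [this, Finset.card_empty]
    rw [hDK', hDK₀, hIe]
    simp
  case pos =>
    obtain ⟨q', hq'mem, hq'min⟩ := Finset.exists_min_image (C.V \ K') Prod.fst hW
    rw [Finset.mem_sdiff] at hq'mem
    obtain ⟨hq'V, hq'K'⟩ := hq'mem
    have hq'K₀ : q' ∉ K₀ := fun h => hq'K' (Finset.mem_insert_of_mem h)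
    have hq'q : q' ≠ q := fun h => hq'K' (by rw [h]; exact Finset.mem_insert_self _ _)
    have hqq' : q.1 < q'.1 := hmin q' hq'V hq'K₀ hq'q
    set ξm := q.1 with hξm
    set ξp := q'.1 with hξp
    have hDK₀ : C.Dk K₀ = (C.GP K₀ ξm).card := by
      apply C.Dk_eq q (Finset.mem_sdiff.mpr ⟨hqV, hqK⟩)
      intro v hv
      rw [Finset.mem_sdiff] at hv
      by_cases hvq : v = q
      · rw [hvq]
      · exact le_of_lt (hmin v hv.1 hv.2 hvq)
    have hDK' : C.Dk K' = (C.GP K' ξp).card := by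
      apply C.Dk_eq q' (Finset.mem_sdiff.mpr ⟨hq'V, hq'K'⟩)
      intro v hv
      exact hq'min v hv
    set R : Finset Edge := (C.alive K₀).filter (fun e => e.2 = q) with hRdef
    set AB : Finset Edge := (C.alive K₀).filter (fun e => e.2 ≠ q) with hABdef
    have hRAB : ∀ e ∈ C.alive K₀, e ∈ R ∨ e ∈ AB := by
      intro e he
      by_cases h : e.2 = q
      · exact Or.inl (Finset.mem_filter.mpr ⟨he, h⟩)
      · exact Or.inr (Finset.mem_filter.mpr ⟨he, h⟩)
    have hAB_E : ∀ e ∈ AB, e ∈ C.E := fun e he =>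
      C.alive_subset ((Finset.filter_subset _ _) he)
    have hI_E : ∀ e ∈ I, e ∈ C.E := by
      intro e he; rw [hIdef, Finset.mem_filter] at he; exact he.1
    have hR_E : ∀ e ∈ R, e ∈ C.E := fun e he =>
      C.alive_subset ((Finset.filter_subset _ _) he)
    have hI_left : ∀ e ∈ I, e.1 = q := by
      intro e he; rw [hIdef, Finset.mem_filter] at he; exact he.2
    have hAB_alive : ∀ e ∈ AB, e ∈ C.alive K' := by
      intro e he
      rw [hABdef, Finset.mem_filter] at he
      obtain ⟨he, hne⟩ := he
      rw [Config.alive, Finset.mem_filter] at he ⊢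
      refine ⟨he.1, Finset.mem_insert_of_mem he.2.1, ?_⟩
      intro h
      rcases Finset.mem_insert.mp h with h | h
      · exact hne h
      · exact he.2.2 h
    have halive' : ∀ e ∈ C.alive K', e ∈ AB ∨ e ∈ I := by
      intro e he
      rw [Config.alive, Finset.mem_filter] at he
      obtain ⟨heE, he1, he2⟩ := he
      rcases Finset.mem_insert.mp he1 with h | h
      · exact Or.inr (Finset.mem_filter.mpr ⟨heE, h⟩)
      · left
        rw [hABdef, Finset.mem_filter]
        constructor
        · rw [Config.alive, Finset.mem_filter]
          exact ⟨heE, h, fun hc => he2 (Finset.mem_insert_of_mem hc)⟩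
        · intro hc; exact he2 (by rw [hc]; exact Finset.mem_insert_self _ _)
    have hABI_disj : ∀ e, e ∈ AB → e ∈ I → False := by
      intro e h1 h2
      have := hI_left e h2
      rw [hABdef, Finset.mem_filter, Config.alive, Finset.mem_filter] at h1
      rw [this] at h1
      exact hqK h1.1.2.1
    -- geometry facts
    have hR_hgt : ∀ e ∈ R, hgt e ξm = q.2 := by
      intro e he
      rw [hRdef, Finset.mem_filter] at he
      have h2 := he.2
      have := hgt_right e (ne_of_lt (C.hlt e (C.alive_subset he.1)))
      rw [h2] at this
      exact this
    have hI_hgt : ∀ e ∈ I, hgt e ξm = q.2 := by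
      intro e he
      have h1 := hI_left e he
      have := hgt_left e
      rw [h1] at this
      exact this
    have hAB_int : ∀ g ∈ AB, g.1.1 < ξm ∧ ξm < g.2.1 := by
      intro g hg
      rw [hABdef, Finset.mem_filter] at hg
      obtain ⟨hg, hne⟩ := hg
      rw [Config.alive, Finset.mem_filter] at hg
      exact ⟨hdown _ hg.2.1, hmin _ (C.he2 g hg.1) hg.2.2 hne⟩
    have hAB_ne : ∀ g ∈ AB, hgt g ξm ≠ q.2 := by
      intro g hg
      obtain ⟨h1, h2⟩ := hAB_int g hg
      exact C.hin g (hAB_E g hg) q hqV h1 h2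
    have hspan : ∀ u ∈ C.alive K', u.1.1 ≤ ξm ∧ ξp ≤ u.2.1 := by
      intro u hu
      have hu2 : ξp ≤ u.2.1 := by
        rw [Config.alive, Finset.mem_filter] at hu
        exact hq'min u.2 (Finset.mem_sdiff.mpr ⟨C.he2 u hu.1, hu.2.2⟩)
      rcases halive' u hu with h | h
      · exact ⟨le_of_lt (hAB_int u h).1, hu2⟩
      · exact ⟨le_of_eq (by rw [hI_left u h]), hu2⟩
    have hpers : ∀ u ∈ C.alive K', ∀ v ∈ C.alive K', u ≠ v →
        hgt u ξm < hgt v ξm → hgt v ξp < hgt u ξp → False := by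
      intro u hu v hv huv h1 h2
      obtain ⟨hua, hub⟩ := hspan u hu
      obtain ⟨hva, hvb⟩ := hspan v hv
      exact persistence hqq' hua hub hva hvb
        (fun x a b c d => C.hcr u (C.alive_subset hu) v (C.alive_subset hv) huv x a b c d)
        h1 h2
    have htie : ∀ u ∈ C.alive K', ∀ v ∈ C.alive K', u ≠ v → u.1 = v.1 →
        hgt u ξp ≠ hgt v ξp := by
      intro u hu v hv huv hleft heq
      obtain ⟨hua, hub⟩ := hspan u hu
      obtain ⟨hva, hvb⟩ := hspan v hv
      have hu1 : u.1.1 < ξp := lt_of_le_of_lt hua hqq'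
      have hv1 : v.1.1 < ξp := lt_of_le_of_lt hva hqq'
      have huq' : u.2.1 = ξp → u.2 = q' := fun h =>
        C.hx u.2 (C.he2 u (C.alive_subset hu)) q' hq'V h
      have hvq' : v.2.1 = ξp → v.2 = q' := fun h =>
        C.hx v.2 (C.he2 v (C.alive_subset hv)) q' hq'V h
      rcases eq_or_lt_of_le hub with hu2 | hu2
      · -- u ends at q'
        have hu2' : u.2 = q' := huq' hu2.symm
        have hgu : hgt u ξp = q'.2 := by
          have := hgt_right u (ne_of_lt (C.hlt u (C.alive_subset hu)))
          rw [hu2'] at this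
          exact this
        rcases eq_or_lt_of_le hvb with hv2 | hv2
        · have hv2' : v.2 = q' := hvq' hv2.symm
          exact huv (Prod.ext hleft (by rw [hu2', hv2']))
        · -- v passes strictly over ξp, carrying height q'.2 : contradiction with hin
          have : hgt v ξp = q'.2 := by rw [← heq, hgu]
          exact C.hin v (C.alive_subset hv) q' hq'V hv1 hv2 this
      · rcases eq_or_lt_of_le hvb with hv2 | hv2
        · have hv2' : v.2 = q' := hvq' hv2.symm
          have hgv : hgt v ξp = q'.2 := by
            have := hgt_right v (ne_of_lt (C.hlt v (C.alive_subset hv)))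
            rw [hv2'] at this
            exact this
          have : hgt u ξp = q'.2 := by rw [heq, hgv]
          exact C.hin u (C.alive_subset hu) q' hq'V hu1 hu2 this
        · exact huv (C.hgt_inj (C.alive_subset hu) (C.alive_subset hv) hu1 hu2 hv1 hv2 heq)
    -- unpack GP membership
    have hGPmem : ∀ {K : Finset Pt} {ξ : ℝ} {p : Edge × Edge}, p ∈ C.GP K ξ →
        p.1 ∈ C.alive K ∧ p.2 ∈ C.alive K ∧ p.1.1 = p.2.1 ∧ hgt p.1 ξ < hgt p.2 ξ ∧
        ∀ g ∈ C.alive K, ¬(hgt p.1 ξ < hgt g ξ ∧ hgt g ξ < hgt p.2 ξ) := by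
      intro K ξ p hp
      rw [Config.GP, Finset.mem_filter, Finset.mem_product] at hp
      exact ⟨hp.1.1, hp.1.2, hp.2.1, hp.2.2.1, hp.2.2.2⟩
    have hGPintro : ∀ {K : Finset Pt} {ξ : ℝ} {p : Edge × Edge},
        p.1 ∈ C.alive K → p.2 ∈ C.alive K → p.1.1 = p.2.1 → hgt p.1 ξ < hgt p.2 ξ →
        (∀ g ∈ C.alive K, ¬(hgt p.1 ξ < hgt g ξ ∧ hgt g ξ < hgt p.2 ξ)) → p ∈ C.GP K ξ := by
      intro K ξ p h1 h2 h3 h4 h5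
      rw [Config.GP, Finset.mem_filter, Finset.mem_product]
      exact ⟨⟨h1, h2⟩, h3, h4, h5⟩
    classical
    -- split good pairs into doomed and surviving
    set DOOM : Finset (Edge × Edge) := (C.GP K₀ ξm).filter
      (fun p => p.1 ∈ R ∨ p.2 ∈ R ∨ (hgt p.1 ξm < q.2 ∧ q.2 < hgt p.2 ξm)) with hDOOMdef
    set SRV : Finset (Edge × Edge) := (C.GP K₀ ξm).filter
      (fun p => ¬(p.1 ∈ R ∨ p.2 ∈ R ∨ (hgt p.1 ξm < q.2 ∧ q.2 < hgt p.2 ξm))) with hSRVdef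
    have hsplit : DOOM.card + SRV.card = (C.GP K₀ ξm).card :=
      Finset.card_filter_add_card_filter_not _
    have hAB_of_lt : ∀ e ∈ C.alive K₀, hgt e ξm < q.2 → e ∈ AB := by
      intro e he h
      rcases hRAB e he with h' | h'
      · exact absurd (hR_hgt e h') (ne_of_lt h)
      · exact h'
    have hAB_of_gt : ∀ e ∈ C.alive K₀, q.2 < hgt e ξm → e ∈ AB := by
      intro e he h
      rcases hRAB e he with h' | h'
      · exact absurd (hR_hgt e h') (ne_of_gt h)
      · exact h'
    have hABinj : ∀ u ∈ AB, ∀ v ∈ AB, hgt u ξm = hgt v ξm → u = v := by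
      intro u hu v hv h
      obtain ⟨h1, h2⟩ := hAB_int u hu
      obtain ⟨h3, h4⟩ := hAB_int v hv
      exact C.hgt_inj (hAB_E u hu) (hAB_E v hv) h1 h2 h3 h4 h
    have hDOOMchar : ∀ p ∈ DOOM,
        (hgt p.1 ξm < q.2 ∧ p.1 ∈ AB ∧ q.2 ≤ hgt p.2 ξm ∧ (p.2 ∈ R ∨ p.2 ∈ AB))
        ∨ (hgt p.1 ξm = q.2 ∧ p.1 ∈ R ∧ p.2 ∈ AB ∧ q.2 < hgt p.2 ξm) := by
      intro p hp
      rw [hDOOMdef, Finset.mem_filter] at hp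
      obtain ⟨hpGP, hdm⟩ := hp
      obtain ⟨hp1, hp2, hleft, hord, hadj⟩ := hGPmem hpGP
      rcases hdm with h | h | h
      · right
        have h1 := hR_hgt _ h
        refine ⟨h1, h, ?_, by rw [← h1]; exact hord⟩
        exact hAB_of_gt _ hp2 (by rw [← h1]; exact hord)
      · left
        have h2 := hR_hgt _ h
        have h1 : hgt p.1 ξm < q.2 := by rw [← h2]; exact hord
        exact ⟨h1, hAB_of_lt _ hp1 h1, le_of_eq h2.symm, Or.inl h⟩
      · exact Or.inl ⟨h.1, hAB_of_lt _ hp1 h.1, le_of_lt h.2, hRAB _ hp2⟩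
    have hDOOMcard : DOOM.card ≤ 2 := by
      have h2 : DOOM.card ≤ (Finset.univ : Finset Bool).card := by
        apply Finset.card_le_card_of_injOn (fun p => decide (hgt p.1 ξm < q.2))
          (fun p _ => Finset.mem_univ _)
        intro p hp p' hp' hslot
        simp only [Finset.mem_coe] at hp hp'
        have hpGP : p ∈ C.GP K₀ ξm := Finset.filter_subset _ _ hp
        have hpGP' : p' ∈ C.GP K₀ ξm := Finset.filter_subset _ _ hp'
        obtain ⟨hp1, hp2, hleft, hord, hadj⟩ := hGPmem hpGP
        obtain ⟨hp1', hp2', hleft', hord', hadj'⟩ := hGPmem hpGP'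
        have hiff : (hgt p.1 ξm < q.2) ↔ (hgt p'.1 ξm < q.2) := by
          constructor
          · intro h; by_contra h'
            simp only [decide_eq_decide] at hslot
            exact h' (hslot.mp h)
          · intro h; by_contra h'
            simp only [decide_eq_decide] at hslot
            exact h' (hslot.mpr h)
        by_cases hs : hgt p.1 ξm < q.2
        · have hs' : hgt p'.1 ξm < q.2 := hiff.mp hs
          have hc := (hDOOMchar p hp).resolve_right (fun h => ne_of_lt hs h.1)
          have hc' := (hDOOMchar p' hp').resolve_right (fun h => ne_of_lt hs' h.1)
          obtain ⟨_, hpa, hple, hpr⟩ := hc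
          obtain ⟨_, hpa', hple', hpr'⟩ := hc'
          have he : p.1 = p'.1 := by
            rcases lt_trichotomy (hgt p.1 ξm) (hgt p'.1 ξm) with h | h | h
            · exact absurd ⟨h, lt_of_lt_of_le hs' hple⟩
                (hadj p'.1 (Finset.filter_subset _ _ hpa'))
            · exact hABinj _ hpa _ hpa' h
            · exact absurd ⟨h, lt_of_lt_of_le hs hple'⟩
                (hadj' p.1 (Finset.filter_subset _ _ hpa))
          have hf : p.2 = p'.2 := by
            rcases lt_trichotomy (hgt p.2 ξm) (hgt p'.2 ξm) with h | h | h
            · refine absurd ⟨?_, h⟩ (hadj' p.2 hp2)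
              rw [← he]; exact hord
            · rcases hpr with hr | hab
              · rcases hpr' with hr' | hab'
                · rw [hRdef, Finset.mem_filter] at hr hr'
                  have : p.2.1 = p'.2.1 := by rw [← hleft, ← hleft', he]
                  exact Prod.ext this (by rw [hr.2, hr'.2])
                · exact absurd h.symm (by rw [hR_hgt _ hr]; exact hAB_ne _ hab')
              · rcases hpr' with hr' | hab'
                · exact absurd h (by rw [hR_hgt _ hr']; exact hAB_ne _ hab)
                · exact hABinj _ hab _ hab' h
            · refine absurd ⟨?_, h⟩ (hadj p'.2 hp2')
              rw [he]; exact hord'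
          exact Prod.ext he hf
        · have hs' : ¬ hgt p'.1 ξm < q.2 := fun h => hs (hiff.mpr h)
          have hc := (hDOOMchar p hp).resolve_left (fun h => hs h.1)
          have hc' := (hDOOMchar p' hp').resolve_left (fun h => hs' h.1)
          obtain ⟨heq1, hp1R, hp2AB, hgt2⟩ := hc
          obtain ⟨heq1', hp1R', hp2AB', hgt2'⟩ := hc'
          have hf : p.2 = p'.2 := by
            rcases lt_trichotomy (hgt p.2 ξm) (hgt p'.2 ξm) with h | h | h
            · exact absurd ⟨by rw [heq1']; exact hgt2, h⟩
                (hadj' p.2 hp2)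
            · exact hABinj _ hp2AB _ hp2AB' h
            · exact absurd ⟨by rw [heq1]; exact hgt2', h⟩
                (hadj p'.2 hp2')
          have he : p.1 = p'.1 := by
            rw [hRdef, Finset.mem_filter] at hp1R hp1R'
            have h1 : p.1.1 = p'.1.1 := by rw [hleft, hleft', hf]
            exact Prod.ext h1 (by rw [hp1R.2, hp1R'.2])
          exact Prod.ext he hf
      simpa using h2
    -- survivors stay good
    have hSRVsub : SRV ⊆ C.GP K' ξp := by
      intro p hp
      rw [hSRVdef, Finset.mem_filter] at hp
      obtain ⟨hpGP, hnd⟩ := hp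
      have hnd1 : p.1 ∉ R := fun h => hnd (Or.inl h)
      have hnd2 : p.2 ∉ R := fun h => hnd (Or.inr (Or.inl h))
      have hnd3 : ¬(hgt p.1 ξm < q.2 ∧ q.2 < hgt p.2 ξm) := fun h => hnd (Or.inr (Or.inr h))
      obtain ⟨hp1, hp2, hleft, hord, hadj⟩ := hGPmem hpGP
      have hp1AB : p.1 ∈ AB := (hRAB _ hp1).resolve_left hnd1
      have hp2AB : p.2 ∈ AB := (hRAB _ hp2).resolve_left hnd2
      have hp1' := hAB_alive _ hp1AB
      have hp2' := hAB_alive _ hp2AB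
      have hne : p.1 ≠ p.2 := fun h => absurd hord (by rw [h]; exact lt_irrefl _)
      have hordp : hgt p.1 ξp < hgt p.2 ξp := by
        rcases lt_trichotomy (hgt p.1 ξp) (hgt p.2 ξp) with h | h | h
        · exact h
        · exact absurd h (htie _ hp1' _ hp2' hne hleft)
        · exact absurd h (fun h' => hpers _ hp1' _ hp2' hne hord h')
      apply hGPintro hp1' hp2' hleft hordp
      intro g hg
      rintro ⟨hg1, hg2⟩
      have hgne : g ≠ p.1 := fun h => absurd hg1 (by rw [h]; exact lt_irrefl _)
      have hgnf : g ≠ p.2 := fun h => absurd hg2 (by rw [h]; exact lt_irrefl _)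
      rcases halive' g hg with hgAB | hgI
      · have h1 : hgt g ξm ≠ hgt p.1 ξm := fun h => hgne (hABinj _ hgAB _ hp1AB h)
        have h2 : hgt g ξm ≠ hgt p.2 ξm := fun h => hgnf (hABinj _ hgAB _ hp2AB h)
        rcases lt_or_gt_of_ne h1 with hlt1 | hgt1
        · exact hpers _ hg _ hp1' hgne hlt1 hg1
        · rcases lt_or_gt_of_ne h2 with hlt2 | hgt2
          · exact hadj g (Finset.filter_subset _ _ hgAB) ⟨hgt1, hlt2⟩
          · exact hpers _ hp2' _ hg (Ne.symm hgnf) hgt2 hg2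
      · have hgq : hgt g ξm = q.2 := hI_hgt g hgI
        by_cases hcase : hgt p.1 ξm < q.2
        · have hle : ¬ q.2 < hgt p.2 ξm := fun h => hnd3 ⟨hcase, h⟩
          have hlt2 : hgt p.2 ξm < q.2 := lt_of_le_of_ne (not_lt.mp hle) (hAB_ne _ hp2AB)
          exact hpers _ hp2' _ hg (Ne.symm hgnf) (by rw [hgq]; exact hlt2) hg2
        · have hgt1 : q.2 < hgt p.1 ξm :=
            lt_of_le_of_ne (not_lt.mp hcase) (Ne.symm (hAB_ne _ hp1AB))
          exact hpers _ hg _ hp1' hgne (by rw [hgq]; exact hgt1) hg1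
    -- new pairs from edges starting at q
    set key : Edge → ℝ := fun e => hgt e ξp with hkeydef
    have hIkey : ∀ e ∈ I, ∀ f ∈ I, e ≠ f → key e ≠ key f := by
      intro e he f hf hef
      exact htie _ (hI_alive e he) _ (hI_alive f hf) hef
        (by rw [hI_left e he, hI_left f hf])
    set Inb : Finset Edge := I.filter (fun e => ∃ f ∈ I, key e < key f) with hInbdef
    have hInbsub : Inb ⊆ I := Finset.filter_subset _ _
    have hInbcard : I.card ≤ Inb.card + 1 := by
      have h1 : (I \ Inb).card ≤ 1 := by
        rw [Finset.card_le_one]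
        intro a ha b hb
        have haI : a ∈ I := (Finset.mem_sdiff.mp ha).1
        have hbI : b ∈ I := (Finset.mem_sdiff.mp hb).1
        have haN : a ∉ Inb := (Finset.mem_sdiff.mp ha).2
        have hbN : b ∉ Inb := (Finset.mem_sdiff.mp hb).2
        by_contra hab
        rcases lt_or_gt_of_ne (hIkey a haI b hbI hab) with h | h
        · exact haN (Finset.mem_filter.mpr ⟨haI, b, hbI, h⟩)
        · exact hbN (Finset.mem_filter.mpr ⟨hbI, a, haI, h⟩)
      have h2 := Finset.card_sdiff_of_subset hInbsub
      have h3 := Finset.card_le_card hInbsub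
      omega
    have hex : ∀ e ∈ Inb, ∃ f, (f ∈ I ∧ key e < key f) ∧
        ∀ g, (g ∈ I ∧ key e < key g) → key f ≤ key g := by
      intro e he
      obtain ⟨heI, f0, hf0, hkf0⟩ := Finset.mem_filter.mp he
      obtain ⟨f, hf, hfmin⟩ := Finset.exists_min_image
        (I.filter (fun g => key e < key g)) key ⟨f0, Finset.mem_filter.mpr ⟨hf0, hkf0⟩⟩
      rw [Finset.mem_filter] at hf
      exact ⟨f, hf, fun g hg => hfmin g (Finset.mem_filter.mpr hg)⟩
    choose! nxt hn1 hn2 using hex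
    have hnew_mem : ∀ e ∈ Inb, (e, nxt e) ∈ C.GP K' ξp := by
      intro e he
      obtain ⟨hfI, hflt⟩ := hn1 e he
      have heI : e ∈ I := hInbsub he
      have henf : e ≠ nxt e := fun h => absurd hflt (by rw [← h]; exact lt_irrefl _)
      apply hGPintro (hI_alive e heI) (hI_alive _ hfI)
        (by rw [hI_left e heI, hI_left _ hfI]) hflt
      intro g hg
      rintro ⟨hg1, hg2⟩
      rcases halive' g hg with hgAB | hgI
      · have hgeI : g ≠ e := fun h => hABI_disj g hgAB (h ▸ heI)
        have hgnx : (nxt e) ≠ g := fun h => hABI_disj g hgAB (h ▸ hfI)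
        rcases lt_or_gt_of_ne (hAB_ne g hgAB) with hlt | hgt'
        · exact hpers _ hg _ (hI_alive e heI) hgeI
            (by rw [hI_hgt e heI]; exact hlt) hg1
        · exact hpers _ (hI_alive _ hfI) _ hg hgnx
            (by rw [hI_hgt _ hfI]; exact hgt') hg2
      · exact absurd (hn2 e he g ⟨hgI, hg1⟩) (not_le.mpr hg2)
    set NEW : Finset (Edge × Edge) := Inb.image (fun e => (e, nxt e)) with hNEWdef
    have hNEWcard : NEW.card = Inb.card :=
      Finset.card_image_of_injOn (fun a _ b _ h => congrArg Prod.fst h)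
    have hNEWsub : NEW ⊆ C.GP K' ξp := by
      intro p hp
      obtain ⟨e, he, rfl⟩ := Finset.mem_image.mp hp
      exact hnew_mem e he
    have hdisj : Disjoint SRV NEW := by
      rw [Finset.disjoint_left]
      intro p hpS hpN
      obtain ⟨e, he, rfl⟩ := Finset.mem_image.mp hpN
      rw [hSRVdef, Finset.mem_filter] at hpS
      obtain ⟨hpGP, hnd⟩ := hpS
      obtain ⟨hp1, _, _, _, _⟩ := hGPmem hpGP
      have hp1AB : (e, nxt e).1 ∈ AB := (hRAB _ hp1).resolve_left (fun h => hnd (Or.inl h))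
      exact hABI_disj e hp1AB (hInbsub he)
    have hfinal : SRV.card + NEW.card ≤ (C.GP K' ξp).card := by
      rw [← Finset.card_union_of_disjoint hdisj]
      exact Finset.card_le_card (Finset.union_subset hSRVsub hNEWsub)
    rw [hDK₀, hDK']
    omega
  
lemma sweep (C : Config) : ∀ (n : ℕ) (K : Finset Pt), K ⊆ C.V → K.card = n →
    (∀ k ∈ K, ∀ v ∈ C.V, v ∉ K → k.1 < v.1) →
    (C.E.filter (fun e => e.1 ∈ K)).card ≤ 3 * K.card + C.Dk K := by
  intro n
  induction n with
  | zero =>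
    intro K hKV hKc hdc
    have hKe : K = ∅ := Finset.card_eq_zero.mp hKc
    subst hKe
    simp
  | succ n ih =>
    intro K hKV hKc hdc
    have hKne : K.Nonempty := by
      rw [← Finset.card_pos, hKc]; omega
    obtain ⟨q, hqK, hqmax⟩ := Finset.exists_max_image K Prod.fst hKne
    have hqV : q ∈ C.V := hKV hqK
    set K₀ : Finset Pt := K.erase q with hK₀def
    have hK : K = insert q K₀ := (Finset.insert_erase hqK).symm
    have hqK₀ : q ∉ K₀ := Finset.notMem_erase _ _
    have hK₀V : K₀ ⊆ C.V := Finset.Subset.trans (Finset.erase_subset _ _) hKV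
    have hK₀c : K₀.card = n := by
      rw [hK₀def, Finset.card_erase_of_mem hqK, hKc]
      omega
    have hdown : ∀ k ∈ K₀, k.1 < q.1 := by
      intro k hk
      have hkK : k ∈ K := Finset.mem_of_mem_erase hk
      have hne : k ≠ q := Finset.ne_of_mem_erase hk
      rcases lt_or_eq_of_le (hqmax k hkK) with h | h
      · exact h
      · exact absurd (C.hx k (hKV hkK) q hqV h) hne
    have hmin : ∀ v ∈ C.V, v ∉ K₀ → v ≠ q → q.1 < v.1 := by
      intro v hv hvK₀ hvq
      have hvK : v ∉ K := by
        intro h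
        rcases Finset.mem_insert.mp (hK ▸ h) with h' | h'
        · exact hvq h'
        · exact hvK₀ h'
      exact hdc q hqK v hv hvK
    have hdc₀ : ∀ k ∈ K₀, ∀ v ∈ C.V, v ∉ K₀ → k.1 < v.1 := by
      intro k hk v hv hvK₀
      by_cases hvq : v = q
      · rw [hvq]; exact hdown k hk
      · have hvK : v ∉ K := by
          intro h
          rcases Finset.mem_insert.mp (hK ▸ h) with h' | h'
          · exact hvq h'
          · exact hvK₀ h'
        exact hdc k (Finset.mem_of_mem_erase hk) v hv hvK
    have hih := ih K₀ hK₀V hK₀c hdc₀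
    have hstep := C.step hK₀V hqV hqK₀ hdown hmin
    have hcount : (C.E.filter (fun e => e.1 ∈ K)).card =
        (C.E.filter (fun e => e.1 ∈ K₀)).card + (C.E.filter (fun e => e.1 = q)).card := by
      classical
      have hfe : C.E.filter (fun e => e.1 ∈ K) =
          (C.E.filter (fun e => e.1 ∈ K₀)) ∪ (C.E.filter (fun e => e.1 = q)) := by
        rw [← Finset.filter_or]
        apply Finset.filter_congr
        intro e _
        constructor
        · intro h
          rw [hK] at h
          rcases Finset.mem_insert.mp h with h' | h'
          · exact Or.inr h'
          · exact Or.inl h'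
        · intro h
          rw [hK]
          rcases h with h' | h'
          · exact Finset.mem_insert_of_mem h'
          · exact h' ▸ Finset.mem_insert_self _ _
      rw [hfe, Finset.card_union_of_disjoint]
      rw [Finset.disjoint_left]
      intro e he1 he2
      have h1 : e.1 ∈ K₀ := (Finset.mem_filter.mp he1).2
      have h2 : e.1 = q := (Finset.mem_filter.mp he2).2
      exact hqK₀ (h2 ▸ h1)
    rw [← hK] at hstep
    have hKcard : K.card = K₀.card + 1 := by omega
    omega

/-- The sparsity bound: a crossing-free configuration has at most `3|V|` edges. -/
theorem card_bound (C : Config) : C.E.card ≤ 3 * C.V.card := by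
  have h := C.sweep C.V.card C.V (subset_refl _) rfl
    (fun k _ v hv hvn => absurd hv hvn)
  have hD : C.Dk C.V = 0 := C.Dk_empty (by simp)
  have hfil : C.E.filter (fun e => e.1 ∈ C.V) = C.E :=
    Finset.filter_true_of_mem (fun e he => C.he1 e he)
  rw [hfil, hD] at h
  omega

end Config

/-- Two segments cross: their open graphs meet. -/
def cross (e f : Edge) : Prop :=
  e ≠ f ∧ ∃ x, e.1.1 < x ∧ x < e.2.1 ∧ f.1.1 < x ∧ x < f.2.1 ∧ hgt e x = hgt f x

lemma cross_symm {e f : Edge} (h : cross e f) : cross f e := by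
  obtain ⟨hne, x, h1, h2, h3, h4, h5⟩ := h
  exact ⟨hne.symm, x, h3, h4, h1, h2, h5.symm⟩

/-- Greedy deletion: any segment family pays for its crossings. -/
lemma sub_bound (V : Finset Pt) (hVx : ∀ p ∈ V, ∀ q ∈ V, p.1 = q.1 → p = q) :
    ∀ (n : ℕ) (F : Finset Edge), F.card ≤ n →
    (∀ e ∈ F, e.1 ∈ V) → (∀ e ∈ F, e.2 ∈ V) → (∀ e ∈ F, e.1.1 < e.2.1) →
    (∀ e ∈ F, ∀ w ∈ V, e.1.1 < w.1 → w.1 < e.2.1 → hgt e w.1 ≠ w.2) →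
    2 * F.card ≤ 6 * V.card + ((F ×ˢ F).filter (fun pr => cross pr.1 pr.2)).card := by
  intro n
  induction n with
  | zero =>
    intro F hFc _ _ _ _
    have : F = ∅ := Finset.card_eq_zero.mp (Nat.le_zero.mp hFc)
    subst this
    simp
  | succ n ih =>
    intro F hFc he1 he2 hlt hin
    by_cases hX : ((F ×ˢ F).filter (fun pr => cross pr.1 pr.2)).Nonempty
    · -- delete an edge involved in a crossing
      obtain ⟨pr, hpr⟩ := hX
      rw [Finset.mem_filter, Finset.mem_product] at hpr
      obtain ⟨⟨hprF1, hprF2⟩, hcr⟩ := hpr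
      set e := pr.1 with hedef
      set f := pr.2 with hfdef
      have hef : e ≠ f := hcr.1
      set F' : Finset Edge := F.erase e with hF'def
      have hF'sub : F' ⊆ F := Finset.erase_subset _ _
      have hF'c : F'.card ≤ n := by
        rw [hF'def, Finset.card_erase_of_mem hprF1]
        omega
      have hihF := ih F' hF'c (fun a ha => he1 a (hF'sub ha)) (fun a ha => he2 a (hF'sub ha))
        (fun a ha => hlt a (hF'sub ha)) (fun a ha => hin a (hF'sub ha))
      -- the crossing set loses at least the two ordered pairs (e,f),(f,e)
      have hXsub : ((F' ×ˢ F').filter (fun pr => cross pr.1 pr.2)) ∪ {(e, f), (f, e)} ⊆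
          ((F ×ˢ F).filter (fun pr => cross pr.1 pr.2)) := by
        intro a ha
        rcases Finset.mem_union.mp ha with h | h
        · rw [Finset.mem_filter, Finset.mem_product] at h ⊢
          exact ⟨⟨hF'sub h.1.1, hF'sub h.1.2⟩, h.2⟩
        · rw [Finset.mem_insert, Finset.mem_singleton] at h
          rcases h with h | h
          · subst h
            rw [Finset.mem_filter, Finset.mem_product]
            exact ⟨⟨hprF1, hprF2⟩, hcr⟩
          · subst h
            rw [Finset.mem_filter, Finset.mem_product]
            exact ⟨⟨hprF2, hprF1⟩, cross_symm hcr⟩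
      have hXdisj : Disjoint ((F' ×ˢ F').filter (fun pr => cross pr.1 pr.2))
          ({(e, f), (f, e)} : Finset (Edge × Edge)) := by
        rw [Finset.disjoint_right]
        intro a ha haX
        rw [Finset.mem_insert, Finset.mem_singleton] at ha
        rw [Finset.mem_filter, Finset.mem_product] at haX
        rcases ha with h | h
        · subst h
          exact (Finset.notMem_erase e F) haX.1.1
        · subst h
          exact (Finset.notMem_erase e F) haX.1.2
      have hpairc : ({(e, f), (f, e)} : Finset (Edge × Edge)).card = 2 := by
        rw [Finset.card_insert_of_notMem, Finset.card_singleton]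
        rw [Finset.mem_singleton]
        intro h
        exact hef (congrArg Prod.fst h)
      have hXcard : ((F' ×ˢ F').filter (fun pr => cross pr.1 pr.2)).card + 2 ≤
          ((F ×ˢ F).filter (fun pr => cross pr.1 pr.2)).card := by
        have := Finset.card_le_card hXsub
        rw [Finset.card_union_of_disjoint hXdisj, hpairc] at this
        exact this
      have hFcard : F.card = F'.card + 1 := by
        rw [hF'def, Finset.card_erase_of_mem hprF1]
        have : 0 < F.card := Finset.card_pos.mpr ⟨e, hprF1⟩
        omega
      omega
    · -- no crossings: apply the sparsity bound
      rw [Finset.not_nonempty_iff_eq_empty] at hX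
      have hcrfree : ∀ e ∈ F, ∀ f ∈ F, e ≠ f → ∀ x, e.1.1 < x → x < e.2.1 →
          f.1.1 < x → x < f.2.1 → hgt e x ≠ hgt f x := by
        intro e heF f hfF hef x h1 h2 h3 h4 h5
        have : (e, f) ∈ (F ×ˢ F).filter (fun pr => cross pr.1 pr.2) := by
          rw [Finset.mem_filter, Finset.mem_product]
          exact ⟨⟨heF, hfF⟩, hef, x, h1, h2, h3, h4, h5⟩
        rw [hX] at this
        exact absurd this (Finset.notMem_empty _)
      have hC : (Config.mk V F hVx he1 he2 hlt hin hcrfree).E.card ≤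
          3 * (Config.mk V F hVx he1 he2 hlt hin hcrfree).V.card :=
        Config.card_bound _
      simp only at hC
      omega

/-- Binomial-type identity for powerset sums. -/
lemma sum_pow_weights (U : Finset Pt) (x y : ℝ) :
    ∑ S ∈ U.powerset, x ^ S.card * y ^ (U.card - S.card) = (x + y) ^ U.card := by
  classical
  induction U using Finset.induction_on with
  | empty => simp
  | @insert a s ha ih =>
    rw [Finset.sum_powerset_insert ha]
    have hcard : (insert a s).card = s.card + 1 := Finset.card_insert_of_notMem ha
    have h1 : ∑ S ∈ s.powerset, x ^ S.card * y ^ ((insert a s).card - S.card) =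
        y * ∑ S ∈ s.powerset, x ^ S.card * y ^ (s.card - S.card) := by
      rw [Finset.mul_sum]
      apply Finset.sum_congr rfl
      intro S hS
      have hSs : S.card ≤ s.card := Finset.card_le_card (Finset.mem_powerset.mp hS)
      rw [hcard]
      have : s.card + 1 - S.card = (s.card - S.card) + 1 := by omega
      rw [this, pow_succ]
      ring
    have h2 : ∑ S ∈ s.powerset, x ^ (insert a S).card * y ^ ((insert a s).card - (insert a S).card) =
        x * ∑ S ∈ s.powerset, x ^ S.card * y ^ (s.card - S.card) := by
      rw [Finset.mul_sum]
      apply Finset.sum_congr rfl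
      intro S hS
      have hSsub : S ⊆ s := Finset.mem_powerset.mp hS
      have haS : a ∉ S := fun h => ha (hSsub h)
      have hSc : (insert a S).card = S.card + 1 := Finset.card_insert_of_notMem haS
      rw [hcard, hSc]
      have : s.card + 1 - (S.card + 1) = s.card - S.card := by omega
      rw [this, pow_succ]
      ring
    rw [h1, h2, ih, hcard, pow_succ]
    ring

/-- Conditional moment: sum of weights over supersets of `T`. -/
lemma cond_moment (U T : Finset Pt) (hT : T ⊆ U) (x y : ℝ) :
    ∑ S ∈ U.powerset.filter (fun S => T ⊆ S), x ^ S.card * y ^ (U.card - S.card)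
      = x ^ T.card * (x + y) ^ (U.card - T.card) := by
  classical
  have hbij : ∑ S ∈ U.powerset.filter (fun S => T ⊆ S), x ^ S.card * y ^ (U.card - S.card)
      = ∑ S' ∈ (U \ T).powerset, x ^ (S'.card + T.card) * y ^ ((U \ T).card - S'.card) := by
    apply Finset.sum_nbij' (fun S => S \ T) (fun S' => S' ∪ T)
    · intro S hS
      rw [Finset.mem_filter, Finset.mem_powerset] at hS
      rw [Finset.mem_powerset]
      exact Finset.sdiff_subset_sdiff hS.1 (subset_refl _)
    · intro S' hS'
      rw [Finset.mem_powerset] at hS'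
      rw [Finset.mem_filter, Finset.mem_powerset]
      constructor
      · apply Finset.union_subset _ hT
        exact hS'.trans (Finset.sdiff_subset)
      · exact Finset.subset_union_right
    · intro S hS
      rw [Finset.mem_filter, Finset.mem_powerset] at hS
      rw [Finset.sdiff_union_self_eq_union]
      exact (Finset.union_eq_left.mpr hS.2)
    · intro S' hS'
      rw [Finset.mem_powerset] at hS'
      apply Finset.union_sdiff_cancel_right
      rw [Finset.disjoint_right]
      intro a haT haS'
      have := hS' haS'
      rw [Finset.mem_sdiff] at this
      exact this.2 haT
    · intro S hS
      rw [Finset.mem_filter, Finset.mem_powerset] at hS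
      have h1 : (S \ T).card = S.card - T.card := Finset.card_sdiff_of_subset hS.2
      have h2 : T.card ≤ S.card := Finset.card_le_card hS.2
      have h3 : S.card ≤ U.card := Finset.card_le_card hS.1
      have h4 : (U \ T).card = U.card - T.card := Finset.card_sdiff_of_subset hT
      have h5 : (S \ T).card + T.card = S.card := by omega
      have h6 : (U \ T).card - (S \ T).card = U.card - S.card := by omega
      rw [h5, h6]
  rw [hbij]
  have : ∑ S' ∈ (U \ T).powerset, x ^ (S'.card + T.card) * y ^ ((U \ T).card - S'.card)
      = x ^ T.card * ∑ S' ∈ (U \ T).powerset, x ^ S'.card * y ^ ((U \ T).card - S'.card) := by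
    rw [Finset.mul_sum]
    apply Finset.sum_congr rfl
    intro S' _
    rw [pow_add]
    ring
  rw [this, sum_pow_weights]
  congr 2
  exact Finset.card_sdiff_of_subset hT

/-- Generic first-moment computation for Bernoulli(p) vertex sampling. -/
lemma moment {γ : Type*} (P : Finset Pt) (p : ℝ) (A : Finset γ) (T : γ → Finset Pt)
    (hT : ∀ a ∈ A, T a ⊆ P) :
    ∑ S ∈ P.powerset, (p ^ S.card * (1 - p) ^ (P.card - S.card)) *
      ((A.filter (fun a => T a ⊆ S)).card : ℝ)
    = ∑ a ∈ A, p ^ (T a).card := by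
  classical
  have hswap : ∑ S ∈ P.powerset, (p ^ S.card * (1 - p) ^ (P.card - S.card)) *
      ((A.filter (fun a => T a ⊆ S)).card : ℝ)
      = ∑ a ∈ A, ∑ S ∈ P.powerset.filter (fun S => T a ⊆ S),
          p ^ S.card * (1 - p) ^ (P.card - S.card) := by
    have h1 : ∀ S, ((A.filter (fun a => T a ⊆ S)).card : ℝ)
        = ∑ a ∈ A, if T a ⊆ S then (1 : ℝ) else 0 := by
      intro S
      rw [Finset.card_filter]
      push_cast
      rfl
    calc ∑ S ∈ P.powerset, (p ^ S.card * (1 - p) ^ (P.card - S.card)) *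
          ((A.filter (fun a => T a ⊆ S)).card : ℝ)
        = ∑ S ∈ P.powerset, ∑ a ∈ A, (if T a ⊆ S then
            p ^ S.card * (1 - p) ^ (P.card - S.card) else 0) := by
          apply Finset.sum_congr rfl
          intro S _
          rw [h1, Finset.mul_sum]
          apply Finset.sum_congr rfl
          intro a _
          by_cases h : T a ⊆ S <;> simp [h]
      _ = ∑ a ∈ A, ∑ S ∈ P.powerset, (if T a ⊆ S then
            p ^ S.card * (1 - p) ^ (P.card - S.card) else 0) := Finset.sum_comm
      _ = ∑ a ∈ A, ∑ S ∈ P.powerset.filter (fun S => T a ⊆ S),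
            p ^ S.card * (1 - p) ^ (P.card - S.card) := by
          apply Finset.sum_congr rfl
          intro a _
          rw [Finset.sum_filter]
  rw [hswap]
  apply Finset.sum_congr rfl
  intro a ha
  rw [cond_moment P (T a) (hT a ha) p (1 - p)]
  have : p + (1 - p) = 1 := by ring
  rw [this, one_pow, mul_one]

/-- Weighted (Bernoulli sampling) amplification of the crossing bound. -/
lemma amplify (P : Finset Pt) (hPx : ∀ p ∈ P, ∀ q ∈ P, p.1 = q.1 → p = q)
    (E : Finset Edge)
    (he1 : ∀ e ∈ E, e.1 ∈ P) (he2 : ∀ e ∈ E, e.2 ∈ P) (hlt : ∀ e ∈ E, e.1.1 < e.2.1)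
    (hin : ∀ e ∈ E, ∀ w ∈ P, e.1.1 < w.1 → w.1 < e.2.1 → hgt e w.1 ≠ w.2)
    (h4 : ∀ pr ∈ (E ×ˢ E).filter (fun pr : Edge × Edge => cross pr.1 pr.2),
       ({pr.1.1, pr.1.2, pr.2.1, pr.2.2} : Finset Pt).card = 4)
    (p : ℝ) (hp0 : 0 ≤ p) (hp1 : p ≤ 1) :
    2 * (p ^ 2 * E.card) ≤ 6 * (p * P.card) +
      p ^ 4 * (((E ×ˢ E).filter (fun pr : Edge × Edge => cross pr.1 pr.2)).card : ℝ) := by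
  classical
  set X := (E ×ˢ E).filter (fun pr : Edge × Edge => cross pr.1 pr.2) with hXdef
  set w : Finset Pt → ℝ := fun S => p ^ S.card * (1 - p) ^ (P.card - S.card) with hwdef
  have hw0 : ∀ S, 0 ≤ w S := fun S =>
    mul_nonneg (pow_nonneg hp0 _) (pow_nonneg (by linarith) _)
  have hpair : ∀ e : Edge, e ∈ E → ({e.1, e.2} : Finset Pt).card = 2 := by
    intro e he
    rw [Finset.card_insert_of_notMem, Finset.card_singleton]
    rw [Finset.mem_singleton]
    intro h
    have := hlt e he
    rw [h] at this
    exact lt_irrefl _ this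
  -- pointwise inequality from the sparsity bound
  have hpt : ∀ S ∈ P.powerset,
      2 * ((E.filter (fun e => ({e.1, e.2} : Finset Pt) ⊆ S)).card) ≤
      6 * ((P.filter (fun v => ({v} : Finset Pt) ⊆ S)).card) +
      ((X.filter (fun pr => ({pr.1.1, pr.1.2, pr.2.1, pr.2.2} : Finset Pt) ⊆ S)).card) := by
    intro S hS
    have hSP : S ⊆ P := Finset.mem_powerset.mp hS
    set F := E.filter (fun e => ({e.1, e.2} : Finset Pt) ⊆ S) with hFdef
    have hFE : F ⊆ E := Finset.filter_subset _ _
    have hFS : ∀ e ∈ F, e.1 ∈ S ∧ e.2 ∈ S := by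
      intro e he
      have := (Finset.mem_filter.mp he).2
      rw [Finset.insert_subset_iff, Finset.singleton_subset_iff] at this
      exact this
    have hsb := sub_bound S
      (fun a ha b hb hab => hPx a (hSP ha) b (hSP hb) hab)
      F.card F (le_refl _)
      (fun e he => (hFS e he).1) (fun e he => (hFS e he).2)
      (fun e he => hlt e (hFE he))
      (fun e he w hw => hin e (hFE he) w (hSP hw))
    have hPS : P.filter (fun v => ({v} : Finset Pt) ⊆ S) = S := by
      ext a
      rw [Finset.mem_filter, Finset.singleton_subset_iff]
      exact ⟨fun h => h.2, fun h => ⟨hSP h, h⟩⟩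
    have hXS : (F ×ˢ F).filter (fun pr : Edge × Edge => cross pr.1 pr.2) =
        X.filter (fun pr => ({pr.1.1, pr.1.2, pr.2.1, pr.2.2} : Finset Pt) ⊆ S) := by
      ext pr
      simp only [hXdef, hFdef, Finset.mem_filter, Finset.mem_product,
        Finset.insert_subset_iff, Finset.singleton_subset_iff]
      tauto
    rw [hPS, ← hXS]
    exact hsb
  -- weighted sum of the pointwise inequalities
  have hsum : ∑ S ∈ P.powerset, w S *
        (2 * ((E.filter (fun e => ({e.1, e.2} : Finset Pt) ⊆ S)).card : ℝ)) ≤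
      ∑ S ∈ P.powerset, w S *
        (6 * ((P.filter (fun v => ({v} : Finset Pt) ⊆ S)).card : ℝ) +
         ((X.filter (fun pr => ({pr.1.1, pr.1.2, pr.2.1, pr.2.2} : Finset Pt) ⊆ S)).card : ℝ)) := by
    apply Finset.sum_le_sum
    intro S hS
    apply mul_le_mul_of_nonneg_left _ (hw0 S)
    have := hpt S hS
    have h' : (2 * ((E.filter (fun e => ({e.1, e.2} : Finset Pt) ⊆ S)).card) : ℝ) ≤
        (6 * ((P.filter (fun v => ({v} : Finset Pt) ⊆ S)).card) +
        ((X.filter (fun pr => ({pr.1.1, pr.1.2, pr.2.1, pr.2.2} : Finset Pt) ⊆ S)).card) : ℝ) := by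
      exact_mod_cast this
    exact h'
  -- compute the three moments
  have hM1 : ∑ S ∈ P.powerset, w S *
      ((E.filter (fun e => ({e.1, e.2} : Finset Pt) ⊆ S)).card : ℝ) = p ^ 2 * E.card := by
    rw [moment P p E (fun e => ({e.1, e.2} : Finset Pt))
      (fun e he => by
        rw [Finset.insert_subset_iff, Finset.singleton_subset_iff]
        exact ⟨he1 e he, he2 e he⟩)]
    rw [Finset.sum_congr rfl (fun e he => by rw [hpair e he])]
    rw [Finset.sum_const, nsmul_eq_mul]
    ring
  have hM2 : ∑ S ∈ P.powerset, w S *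
      ((P.filter (fun v => ({v} : Finset Pt) ⊆ S)).card : ℝ) = p * P.card := by
    rw [moment P p P (fun v => ({v} : Finset Pt))
      (fun v hv => Finset.singleton_subset_iff.mpr hv)]
    rw [Finset.sum_congr rfl (fun v _ => by rw [Finset.card_singleton])]
    rw [Finset.sum_const, nsmul_eq_mul]
    ring
  have hM3 : ∑ S ∈ P.powerset, w S *
      ((X.filter (fun pr => ({pr.1.1, pr.1.2, pr.2.1, pr.2.2} : Finset Pt) ⊆ S)).card : ℝ)
      = p ^ 4 * X.card := by
    rw [moment P p X (fun pr => ({pr.1.1, pr.1.2, pr.2.1, pr.2.2} : Finset Pt))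
      (fun pr hpr => by
        have hprX := hpr
        rw [hXdef, Finset.mem_filter, Finset.mem_product] at hprX
        simp only [Finset.insert_subset_iff, Finset.singleton_subset_iff]
        exact ⟨he1 _ hprX.1.1, he2 _ hprX.1.1, he1 _ hprX.1.2, he2 _ hprX.1.2⟩)]
    rw [Finset.sum_congr rfl (fun pr hpr => by rw [h4 pr hpr])]
    rw [Finset.sum_const, nsmul_eq_mul]
    ring
  have hLHS : ∑ S ∈ P.powerset, w S *
      (2 * ((E.filter (fun e => ({e.1, e.2} : Finset Pt) ⊆ S)).card : ℝ))
      = 2 * (p ^ 2 * E.card) := by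
    rw [← hM1, Finset.mul_sum]
    apply Finset.sum_congr rfl
    intro S _
    ring
  have hRHS : ∑ S ∈ P.powerset, w S *
      (6 * ((P.filter (fun v => ({v} : Finset Pt) ⊆ S)).card : ℝ) +
       ((X.filter (fun pr => ({pr.1.1, pr.1.2, pr.2.1, pr.2.2} : Finset Pt) ⊆ S)).card : ℝ))
      = 6 * (p * P.card) + p ^ 4 * X.card := by
    rw [← hM2, ← hM3, Finset.mul_sum, ← Finset.sum_add_distrib]
    apply Finset.sum_congr rfl
    intro S _
    ring
  rw [hLHS, hRHS] at hsum
  exact hsum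

/-- Two affine functions agreeing at two distinct points agree everywhere. -/
lemma affine_eq_of_two {α β α' β' x1 x2 : ℝ} (h12 : x1 ≠ x2)
    (h1 : α + β * x1 = α' + β' * x1) (h2 : α + β * x2 = α' + β' * x2) :
    ∀ x, α + β * x = α' + β' * x := by
  have hd : x1 - x2 ≠ 0 := sub_ne_zero.mpr h12
  have hβ : β = β' := by
    have h3 : (β - β') * (x1 - x2) = 0 := by nlinarith [h1, h2]
    rcases mul_eq_zero.mp h3 with h | h
    · linarith [sub_eq_zero.mp h]
    · exact absurd h hd
  subst hβ
  have hα : α = α' := by nlinarith [h1]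
  subst hα
  intro x; rfl

/-- Two lines sharing two distinct points are equal as sets. -/
lemma line_eq_of_two {a b c a' b' c' : ℝ} (hab : (a, b) ≠ ((0 : ℝ), (0 : ℝ)))
    (hab' : (a', b') ≠ ((0 : ℝ), (0 : ℝ))) {z z' : Pt} (hzz' : z ≠ z')
    (hz : a * z.1 + b * z.2 = c) (hz' : a * z'.1 + b * z'.2 = c)
    (hw : a' * z.1 + b' * z.2 = c') (hw' : a' * z'.1 + b' * z'.2 = c') :
    {q : Pt | a * q.1 + b * q.2 = c} = {q : Pt | a' * q.1 + b' * q.2 = c'} := by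
  have key : ∀ (a b c a' b' c' : ℝ), (a, b) ≠ ((0:ℝ), (0:ℝ)) →
      a * z.1 + b * z.2 = c → a * z'.1 + b * z'.2 = c →
      a' * z.1 + b' * z.2 = c' → a' * z'.1 + b' * z'.2 = c' →
      ∀ q : Pt, a * q.1 + b * q.2 = c → a' * q.1 + b' * q.2 = c' := by
    intro a b c a' b' c' hab hz hz' hw hw' q hq
    have hdne : (z'.1 - z.1) ≠ 0 ∨ (z'.2 - z.2) ≠ 0 := by
      by_contra h
      push_neg at h
      apply hzz'
      have h1 : z.1 = z'.1 := by linarith [h.1, sub_eq_zero.mp h.1]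
      have h2 : z.2 = z'.2 := by linarith [h.2, sub_eq_zero.mp h.2]
      exact Prod.ext h1 h2
    have hAd : a * (z'.1 - z.1) + b * (z'.2 - z.2) = 0 := by linear_combination hz' - hz
    have hAu : a * (q.1 - z.1) + b * (q.2 - z.2) = 0 := by linear_combination hq - hz
    have hA'd : a' * (z'.1 - z.1) + b' * (z'.2 - z.2) = 0 := by linear_combination hw' - hw
    have hane : a ≠ 0 ∨ b ≠ 0 := by
      by_contra h
      push_neg at h
      exact hab (Prod.ext h.1 h.2)
    have hdet : (q.1 - z.1) * (z'.2 - z.2) - (q.2 - z.2) * (z'.1 - z.1) = 0 := by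
      rcases hane with h | h
      · have hid : a * ((q.1 - z.1) * (z'.2 - z.2) - (q.2 - z.2) * (z'.1 - z.1))
            = (z'.2 - z.2) * (a * (q.1 - z.1) + b * (q.2 - z.2))
              - (q.2 - z.2) * (a * (z'.1 - z.1) + b * (z'.2 - z.2)) := by ring
        rw [hAu, hAd] at hid
        simp only [mul_zero, sub_zero] at hid
        exact (mul_eq_zero.mp hid).resolve_left h
      · have hid : b * ((q.1 - z.1) * (z'.2 - z.2) - (q.2 - z.2) * (z'.1 - z.1))
            = (q.1 - z.1) * (a * (z'.1 - z.1) + b * (z'.2 - z.2))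
              - (z'.1 - z.1) * (a * (q.1 - z.1) + b * (q.2 - z.2)) := by ring
        rw [hAu, hAd] at hid
        simp only [mul_zero, sub_zero, zero_sub, neg_eq_zero] at hid
        exact (mul_eq_zero.mp hid).resolve_left h
    have hgoal : a' * (q.1 - z.1) + b' * (q.2 - z.2) = 0 := by
      rcases hdne with h | h
      · have hid : (a' * (q.1 - z.1) + b' * (q.2 - z.2)) * (z'.1 - z.1)
            = (q.1 - z.1) * (a' * (z'.1 - z.1) + b' * (z'.2 - z.2))
              - b' * ((q.1 - z.1) * (z'.2 - z.2) - (q.2 - z.2) * (z'.1 - z.1)) := by ring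
        rw [hA'd, hdet] at hid
        simp only [mul_zero, sub_zero] at hid
        exact (mul_eq_zero.mp hid).resolve_right h
      · have hid : (a' * (q.1 - z.1) + b' * (q.2 - z.2)) * (z'.2 - z.2)
            = (q.2 - z.2) * (a' * (z'.1 - z.1) + b' * (z'.2 - z.2))
              + a' * ((q.1 - z.1) * (z'.2 - z.2) - (q.2 - z.2) * (z'.1 - z.1)) := by ring
        rw [hA'd, hdet] at hid
        simp only [mul_zero, add_zero] at hid
        exact (mul_eq_zero.mp hid).resolve_right h
    linear_combination hgoal + hw
  ext q
  simp only [Set.mem_setOf_eq]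
  constructor
  · exact key a b c a' b' c' hab hz hz' hw hw' q
  · exact key a' b' c' a b c hab' hw hw' hz hz' q

/-- A non-vertical line through the endpoints of `e` contains the whole graph of `hgt e`. -/
lemma line_hgt {a b c : ℝ} (hab : (a, b) ≠ ((0 : ℝ), (0 : ℝ))) {e : Edge}
    (hlt : e.1.1 < e.2.1)
    (h1 : a * e.1.1 + b * e.1.2 = c) (h2 : a * e.2.1 + b * e.2.2 = c) :
    ∀ x, a * x + b * hgt e x = c := by
  have hb : b ≠ 0 := by
    intro hb0
    subst hb0
    have ha : a ≠ 0 := by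
      intro ha0
      exact hab (Prod.ext ha0 rfl)
    have : e.1.1 = e.2.1 := by
      field_simp at h1 h2
      rw [mul_comm] at h1 h2
      have h1' : e.1.1 = c / a := by field_simp; linarith
      have h2' : e.2.1 = c / a := by field_simp; linarith
      rw [h1', h2']
    exact absurd this (ne_of_lt hlt)
  obtain ⟨α, β, hαβ⟩ := hgt_affine e
  have hg1 : α + β * e.1.1 = (c / b) + (-(a / b)) * e.1.1 := by
    rw [← hαβ, hgt_left]
    field_simp
    linarith
  have hg2 : α + β * e.2.1 = (c / b) + (-(a / b)) * e.2.1 := by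
    rw [← hαβ, hgt_right e (ne_of_lt hlt)]
    field_simp
    linarith
  intro x
  have := affine_eq_of_two (ne_of_lt hlt) hg1 hg2 x
  rw [hαβ, this]
  field_simp
  ring

/-- Lower bound on the number of x-consecutive pairs of a finite set with distinct abscissas. -/
lemma consec_lower (S : Finset Pt) (hSx : ∀ p ∈ S, ∀ q ∈ S, p.1 = q.1 → p = q) :
    S.card ≤ ((S ×ˢ S).filter (fun pr : Pt × Pt => pr.1.1 < pr.2.1 ∧
      ∀ w ∈ S, ¬(pr.1.1 < w.1 ∧ w.1 < pr.2.1))).card + 1 := by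
  classical
  set CP := (S ×ˢ S).filter (fun pr : Pt × Pt => pr.1.1 < pr.2.1 ∧
      ∀ w ∈ S, ¬(pr.1.1 < w.1 ∧ w.1 < pr.2.1)) with hCP
  set Snb := S.filter (fun u => ∃ v ∈ S, u.1 < v.1) with hSnb
  have hSnbsub : Snb ⊆ S := Finset.filter_subset _ _
  have h1 : (S \ Snb).card ≤ 1 := by
    rw [Finset.card_le_one]
    intro p hp q hq
    have hpS : p ∈ S := (Finset.mem_sdiff.mp hp).1
    have hqS : q ∈ S := (Finset.mem_sdiff.mp hq).1
    have hpN : p ∉ Snb := (Finset.mem_sdiff.mp hp).2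
    have hqN : q ∉ Snb := (Finset.mem_sdiff.mp hq).2
    by_contra hpq
    have : p.1 ≠ q.1 := fun h => hpq (hSx p hpS q hqS h)
    rcases lt_or_gt_of_ne this with h | h
    · exact hpN (Finset.mem_filter.mpr ⟨hpS, q, hqS, h⟩)
    · exact hqN (Finset.mem_filter.mpr ⟨hqS, p, hpS, h⟩)
  have hex : ∀ u ∈ Snb, ∃ v, (v ∈ S ∧ u.1 < v.1) ∧
      ∀ g, (g ∈ S ∧ u.1 < g.1) → v.1 ≤ g.1 := by
    intro u hu
    obtain ⟨huS, v0, hv0, hkv0⟩ := Finset.mem_filter.mp hu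
    obtain ⟨v, hv, hvmin⟩ := Finset.exists_min_image
      (S.filter (fun g => u.1 < g.1)) Prod.fst ⟨v0, Finset.mem_filter.mpr ⟨hv0, hkv0⟩⟩
    rw [Finset.mem_filter] at hv
    exact ⟨v, hv, fun g hg => hvmin g (Finset.mem_filter.mpr hg)⟩
  choose! nxt hn1 hn2 using hex
  have hmap : ∀ u ∈ Snb, (u, nxt u) ∈ CP := by
    intro u hu
    obtain ⟨hvS, hvlt⟩ := hn1 u hu
    rw [hCP, Finset.mem_filter, Finset.mem_product]
    refine ⟨⟨hSnbsub hu, hvS⟩, hvlt, ?_⟩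
    intro w hw
    rintro ⟨hw1, hw2⟩
    exact absurd (hn2 u hu w ⟨hw, hw1⟩) (not_le.mpr hw2)
  have h2 : Snb.card ≤ CP.card := by
    apply Finset.card_le_card_of_injOn (fun u => (u, nxt u)) (fun u hu => hmap u hu)
    intro a _ b _ h
    exact congrArg Prod.fst h
  have h3 := Finset.card_sdiff_of_subset hSnbsub
  have h4 := Finset.card_le_card hSnbsub
  omega

/-- Points of `P` on the line `l`. -/
def Pl (P : Finset Pt) (l : Set Pt) : Finset Pt :=
  @Finset.filter _ (fun p => p ∈ l) (fun _ => Classical.propDecidable _) P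

lemma mem_Pl {P : Finset Pt} {l : Set Pt} {p : Pt} : p ∈ Pl P l ↔ p ∈ P ∧ p ∈ l :=
  Finset.mem_filter

/-- Edges of the incidence graph along `l`: x-consecutive pairs of points of `P ∩ l`. -/
def El (P : Finset Pt) (l : Set Pt) : Finset Edge :=
  ((Pl P l) ×ˢ (Pl P l)).filter (fun pr : Pt × Pt => pr.1.1 < pr.2.1 ∧
      ∀ w ∈ Pl P l, ¬(pr.1.1 < w.1 ∧ w.1 < pr.2.1))

lemma mem_El {P : Finset Pt} {l : Set Pt} {e : Edge} :
    e ∈ El P l ↔ (e.1 ∈ Pl P l ∧ e.2 ∈ Pl P l) ∧ e.1.1 < e.2.1 ∧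
      ∀ w ∈ Pl P l, ¬(e.1.1 < w.1 ∧ w.1 < e.2.1) := by
  rw [El, Finset.mem_filter, Finset.mem_product]

/-- Same-line edges with overlapping open x-ranges coincide. -/
lemma El_inj {P : Finset Pt} (hPx : ∀ p ∈ P, ∀ q ∈ P, p.1 = q.1 → p = q)
    {l : Set Pt} {e f : Edge} (he : e ∈ El P l) (hf : f ∈ El P l)
    {x : ℝ} (hex1 : e.1.1 < x) (hex2 : x < e.2.1) (hfx1 : f.1.1 < x) (hfx2 : x < f.2.1) :
    e = f := by
  obtain ⟨⟨he1, he2⟩, helt, hecons⟩ := mem_El.mp he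
  obtain ⟨⟨hf1, hf2⟩, hflt, hfcons⟩ := mem_El.mp hf
  rcases lt_trichotomy e.1.1 f.1.1 with h | h | h
  · exact absurd ⟨h, lt_trans hfx1 hex2⟩ (hecons f.1 hf1)
  · have h1 : e.1 = f.1 :=
      hPx e.1 ((mem_Pl.mp he1).1) f.1 ((mem_Pl.mp hf1).1) h
    rcases lt_trichotomy e.2.1 f.2.1 with h' | h' | h'
    · exact absurd ⟨by rw [← h]; exact helt, h'⟩ (hfcons e.2 he2)
    · exact Prod.ext h1 (hPx e.2 ((mem_Pl.mp he2).1) f.2 ((mem_Pl.mp hf2).1) h')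
    · exact absurd ⟨by rw [h]; exact hflt, h'⟩ (hecons f.2 hf2)
  · exact absurd ⟨h, lt_trans hex1 hfx2⟩ (hfcons e.1 he1)

set_option maxHeartbeats 1000000 in
theorem main_distinct (P : Finset Pt) (L : Finset (Set Pt))
    (hL : ∀ l ∈ L, ∃ a b c : ℝ, (a, b) ≠ ((0 : ℝ), (0 : ℝ)) ∧
      l = {q : Pt | a * q.1 + b * q.2 = c})
    (hPx : ∀ p ∈ P, ∀ q ∈ P, p.1 = q.1 → p = q) :
    ((((P ×ˢ L).filter (fun pl : Pt × Set Pt => pl.1 ∈ pl.2)).card : ℝ)) ≤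
      4 * (P.card : ℝ) ^ ((2 : ℝ) / 3) * (L.card : ℝ) ^ ((2 : ℝ) / 3)
        + 4 * P.card + L.card := by
  classical
  choose! la lb lc hlnz hlset using hL
  set E : Finset Edge := L.biUnion (fun l => El P l) with hEdef
  have hexl : ∀ e ∈ E, ∃ l, l ∈ L ∧ e ∈ El P l := by
    intro e he
    rw [hEdef, Finset.mem_biUnion] at he
    obtain ⟨l, hl, hel⟩ := he
    exact ⟨l, hl, hel⟩
  choose! lineOf hlineL hlineEl using hexl
  have he1 : ∀ e ∈ E, e.1 ∈ P := fun e he => (mem_Pl.mp (mem_El.mp (hlineEl e he)).1.1).1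
  have he2 : ∀ e ∈ E, e.2 ∈ P := fun e he => (mem_Pl.mp (mem_El.mp (hlineEl e he)).1.2).1
  have hltE : ∀ e ∈ E, e.1.1 < e.2.1 := fun e he => (mem_El.mp (hlineEl e he)).2.1
  have hgraph : ∀ l ∈ L, ∀ e ∈ El P l, ∀ x : ℝ, (x, hgt e x) ∈ l := by
    intro l hl e hel x
    obtain ⟨⟨hp1, hp2⟩, hlt', _⟩ := mem_El.mp hel
    have h1 : e.1 ∈ l := (mem_Pl.mp hp1).2
    have h2 : e.2 ∈ l := (mem_Pl.mp hp2).2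
    rw [hlset l hl] at h1 h2 ⊢
    simp only [Set.mem_setOf_eq] at h1 h2 ⊢
    exact line_hgt (hlnz l hl) hlt' h1 h2 x
  have hinE : ∀ e ∈ E, ∀ w ∈ P, e.1.1 < w.1 → w.1 < e.2.1 → hgt e w.1 ≠ w.2 := by
    intro e he w hw h1 h2 heq
    have hl := hlineL e he
    have hel := hlineEl e he
    have hwl : w ∈ lineOf e := by
      have hg := hgraph _ hl e hel w.1
      rw [heq] at hg
      rwa [Prod.mk.eta] at hg
    exact (mem_El.mp hel).2.2 w (mem_Pl.mpr ⟨hw, hwl⟩) ⟨h1, h2⟩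
  have hlines_eq : ∀ l ∈ L, ∀ l' ∈ L, ∀ z z' : Pt, z ≠ z' → z ∈ l → z ∈ l' →
      z' ∈ l → z' ∈ l' → l = l' := by
    intro l hl l' hl' z z' hzz' h1 h2 h3 h4
    rw [hlset l hl] at h1 h3
    rw [hlset l' hl'] at h2 h4
    simp only [Set.mem_setOf_eq] at h1 h2 h3 h4
    rw [hlset l hl, hlset l' hl']
    exact line_eq_of_two (hlnz l hl) (hlnz l' hl') hzz' h1 h3 h2 h4
  set X := (E ×ˢ E).filter (fun pr : Edge × Edge => cross pr.1 pr.2) with hXdef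
  have hXmem : ∀ pr ∈ X, pr.1 ∈ E ∧ pr.2 ∈ E ∧ cross pr.1 pr.2 := by
    intro pr hpr
    rw [hXdef, Finset.mem_filter, Finset.mem_product] at hpr
    exact ⟨hpr.1.1, hpr.1.2, hpr.2⟩
  have hlinecross : ∀ pr ∈ X, lineOf pr.1 ≠ lineOf pr.2 := by
    intro pr hpr h
    obtain ⟨hE1, hE2, hne, x, hx1, hx2, hx3, hx4, _⟩ := hXmem pr hpr
    exact hne (El_inj hPx (hlineEl pr.1 hE1) (h ▸ hlineEl pr.2 hE2) hx1 hx2 hx3 hx4)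
  have hendl : ∀ e ∈ E, e.1 ∈ lineOf e ∧ e.2 ∈ lineOf e := by
    intro e he
    obtain ⟨⟨hp1, hp2⟩, _, _⟩ := mem_El.mp (hlineEl e he)
    exact ⟨(mem_Pl.mp hp1).2, (mem_Pl.mp hp2).2⟩
  have h4quad : ∀ pr ∈ X, ({pr.1.1, pr.1.2, pr.2.1, pr.2.2} : Finset Pt).card = 4 := by
    intro pr hpr
    obtain ⟨hE1, hE2, hcr⟩ := hXmem pr hpr
    obtain ⟨hne, x0, ha1, ha2, ha3, ha4, hheq⟩ := hcr
    have hll' : lineOf pr.1 ≠ lineOf pr.2 := hlinecross pr hpr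
    have hz1 : (x0, hgt pr.1 x0) ∈ lineOf pr.1 :=
      hgraph _ (hlineL _ hE1) _ (hlineEl _ hE1) x0
    have hz2 : (x0, hgt pr.1 x0) ∈ lineOf pr.2 := by
      rw [hheq]
      exact hgraph _ (hlineL _ hE2) _ (hlineEl _ hE2) x0
    have hcommon : ∀ u : Pt, u ∈ lineOf pr.1 → u ∈ lineOf pr.2 → u = (x0, hgt pr.1 x0) := by
      intro u h1 h2
      by_contra hne'
      exact hll' (hlines_eq _ (hlineL _ hE1) _ (hlineL _ hE2) u (x0, hgt pr.1 x0)
        hne' h1 h2 hz1 hz2)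
    have hd : ∀ u : Pt, (u = pr.1.1 ∨ u = pr.1.2) → (u = pr.2.1 ∨ u = pr.2.2) → False := by
      intro u hu hv
      have hul : u ∈ lineOf pr.1 := by
        rcases hu with h | h
        · rw [h]; exact (hendl _ hE1).1
        · rw [h]; exact (hendl _ hE1).2
      have hul' : u ∈ lineOf pr.2 := by
        rcases hv with h | h
        · rw [h]; exact (hendl _ hE2).1
        · rw [h]; exact (hendl _ hE2).2
      have hux : u.1 = x0 := congrArg Prod.fst (hcommon u hul hul')
      rcases hu with h | h
      · rw [h] at hux; linarith
      · rw [h] at hux; linarith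
    have h12 : pr.1.1 ≠ pr.1.2 := fun h => (ne_of_lt (hltE _ hE1)) (congrArg Prod.fst h)
    have h34 : pr.2.1 ≠ pr.2.2 := fun h => (ne_of_lt (hltE _ hE2)) (congrArg Prod.fst h)
    have h13 : pr.1.1 ≠ pr.2.1 := fun h => hd pr.1.1 (Or.inl rfl) (Or.inl h)
    have h14 : pr.1.1 ≠ pr.2.2 := fun h => hd pr.1.1 (Or.inl rfl) (Or.inr h)
    have h23 : pr.1.2 ≠ pr.2.1 := fun h => hd pr.1.2 (Or.inr rfl) (Or.inl h)
    have h24 : pr.1.2 ≠ pr.2.2 := fun h => hd pr.1.2 (Or.inr rfl) (Or.inr h)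
    rw [Finset.card_insert_of_notMem (by
        simp only [Finset.mem_insert, Finset.mem_singleton]
        push_neg
        exact ⟨h12, h13, h14⟩),
      Finset.card_insert_of_notMem (by
        simp only [Finset.mem_insert, Finset.mem_singleton]
        push_neg
        exact ⟨h23, h24⟩),
      Finset.card_insert_of_notMem (by
        simp only [Finset.mem_singleton]
        exact h34),
      Finset.card_singleton]
  have hXcard : X.card ≤ L.card * L.card := by
    have h := Finset.card_le_card_of_injOn
      (fun pr : Edge × Edge => (lineOf pr.1, lineOf pr.2))
      (s := X) (t := L ×ˢ L)
      (fun pr hpr => by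
        rw [Finset.mem_coe, Finset.mem_product]
        exact ⟨hlineL _ (hXmem pr hpr).1, hlineL _ (hXmem pr hpr).2.1⟩)
      (by
        intro pr hpr pr' hpr' heq
        simp only [Finset.mem_coe] at hpr hpr'
        have hl1 : lineOf pr.1 = lineOf pr'.1 := congrArg Prod.fst heq
        have hl2 : lineOf pr.2 = lineOf pr'.2 := congrArg Prod.snd heq
        obtain ⟨hE1, hE2, hne, x0, ha1, ha2, ha3, ha4, hheq⟩ := hXmem pr hpr
        obtain ⟨hE1', hE2', hne', x0', hb1, hb2, hb3, hb4, hheq'⟩ := hXmem pr' hpr'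
        have hll' : lineOf pr.1 ≠ lineOf pr.2 := hlinecross pr hpr
        have hz1 : (x0, hgt pr.1 x0) ∈ lineOf pr.1 :=
          hgraph _ (hlineL _ hE1) _ (hlineEl _ hE1) x0
        have hz2 : (x0, hgt pr.1 x0) ∈ lineOf pr.2 := by
          rw [hheq]
          exact hgraph _ (hlineL _ hE2) _ (hlineEl _ hE2) x0
        have hw1 : (x0', hgt pr'.1 x0') ∈ lineOf pr.1 := by
          rw [hl1]
          exact hgraph _ (hlineL _ hE1') _ (hlineEl _ hE1') x0'
        have hw2 : (x0', hgt pr'.1 x0') ∈ lineOf pr.2 := by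
          rw [hl2, hheq']
          exact hgraph _ (hlineL _ hE2') _ (hlineEl _ hE2') x0'
        have hzw : (x0, hgt pr.1 x0) = (x0', hgt pr'.1 x0') := by
          by_contra hne''
          exact hll' (hlines_eq _ (hlineL _ hE1) _ (hlineL _ hE2)
            _ _ hne'' hz1 hz2 hw1 hw2)
        have hxx : x0 = x0' := congrArg Prod.fst hzw
        subst hxx
        have hfst : pr.1 = pr'.1 :=
          El_inj hPx (hlineEl pr.1 hE1) (hl1 ▸ hlineEl pr'.1 hE1') ha1 ha2 hb1 hb2
        have hsnd : pr.2 = pr'.2 :=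
          El_inj hPx (hlineEl pr.2 hE2) (hl2 ▸ hlineEl pr'.2 hE2') ha3 ha4 hb3 hb4
        exact Prod.ext hfst hsnd)
    calc X.card ≤ (L ×ˢ L).card := h
      _ = L.card * L.card := Finset.card_product L L
  -- counting incidences
  have hdisjEl : ∀ l ∈ L, ∀ l' ∈ L, l ≠ l' → Disjoint (El P l) (El P l') := by
    intro l hl l' hl' hne
    rw [Finset.disjoint_left]
    intro e hel hel'
    obtain ⟨⟨hp1, hp2⟩, hlt', _⟩ := mem_El.mp hel
    obtain ⟨⟨hq1, hq2⟩, _, _⟩ := mem_El.mp hel'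
    have hz : e.1 ≠ e.2 := fun h => (ne_of_lt hlt') (congrArg Prod.fst h)
    exact hne (hlines_eq l hl l' hl' e.1 e.2 hz (mem_Pl.mp hp1).2 (mem_Pl.mp hq1).2
      (mem_Pl.mp hp2).2 (mem_Pl.mp hq2).2)
  have hcardE : E.card = ∑ l ∈ L, (El P l).card := Finset.card_biUnion hdisjEl
  have hIcount : ((P ×ˢ L).filter (fun pl : Pt × Set Pt => pl.1 ∈ pl.2)).card
      = ∑ l ∈ L, (Pl P l).card := by
    have hEq : (P ×ˢ L).filter (fun pl : Pt × Set Pt => pl.1 ∈ pl.2)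
        = L.biUnion (fun l => (Pl P l).image (fun p => (p, l))) := by
      ext pl
      rw [Finset.mem_filter, Finset.mem_product, Finset.mem_biUnion]
      constructor
      · rintro ⟨⟨hp, hl⟩, hmem⟩
        exact ⟨pl.2, hl, Finset.mem_image.mpr ⟨pl.1, mem_Pl.mpr ⟨hp, hmem⟩, Prod.mk.eta⟩⟩
      · rintro ⟨l, hl, hmem⟩
        obtain ⟨p, hp, heq⟩ := Finset.mem_image.mp hmem
        obtain ⟨hpP, hpl⟩ := mem_Pl.mp hp
        rw [← heq]
        exact ⟨⟨hpP, hl⟩, hpl⟩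
    rw [hEq, Finset.card_biUnion]
    · apply Finset.sum_congr rfl
      intro l _
      exact Finset.card_image_of_injective _ (fun a b h => congrArg Prod.fst h)
    · intro l hl l' hl' hne
      simp only [Function.onFun]
      rw [Finset.disjoint_left]
      intro a ha ha'
      obtain ⟨p, _, heq⟩ := Finset.mem_image.mp ha
      obtain ⟨p', _, heq'⟩ := Finset.mem_image.mp ha'
      have e1 : l = a.2 := congrArg Prod.snd heq
      have e2 : l' = a.2 := congrArg Prod.snd heq'
      exact hne (e1.trans e2.symm)
  have hEI : ∑ l ∈ L, (Pl P l).card ≤ E.card + L.card := by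
    have h1 : ∀ l ∈ L, (Pl P l).card ≤ (El P l).card + 1 := by
      intro l _
      exact consec_lower (Pl P l)
        (fun p hp q hq h => hPx p (mem_Pl.mp hp).1 q (mem_Pl.mp hq).1 h)
    calc ∑ l ∈ L, (Pl P l).card ≤ ∑ l ∈ L, ((El P l).card + 1) :=
          Finset.sum_le_sum h1
      _ = (∑ l ∈ L, (El P l).card) + L.card := by
          rw [Finset.sum_add_distrib, Finset.sum_const, smul_eq_mul, mul_one]
      _ = E.card + L.card := by rw [hcardE]
  -- final computation
  have hIle : (((P ×ˢ L).filter (fun pl : Pt × Set Pt => pl.1 ∈ pl.2)).card : ℝ)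
      ≤ (E.card : ℝ) + L.card := by
    have := hIcount ▸ hEI
    exact_mod_cast this
  have hA0 : (0 : ℝ) ≤ (P.card : ℝ) := Nat.cast_nonneg _
  have hB0 : (0 : ℝ) ≤ (L.card : ℝ) := Nat.cast_nonneg _
  have hpow0 : (0 : ℝ) ≤ 4 * (P.card : ℝ) ^ ((2 : ℝ) / 3) * (L.card : ℝ) ^ ((2 : ℝ) / 3) :=
    mul_nonneg (mul_nonneg (by norm_num) (Real.rpow_nonneg hA0 _)) (Real.rpow_nonneg hB0 _)
  by_cases hcase : (E.card : ℝ) ≤ 4 * P.card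
  · linarith
  · push_neg at hcase
    have hee0 : (0 : ℝ) < E.card := lt_of_le_of_lt (mul_nonneg (by norm_num) hA0) hcase
    have hEne : E.Nonempty := by
      rw [← Finset.card_pos]
      exact_mod_cast hee0
    obtain ⟨e0, he0⟩ := hEne
    have hP1 : (1 : ℝ) ≤ P.card := by
      have : P.Nonempty := ⟨e0.1, he1 e0 he0⟩
      have := Finset.card_pos.mpr this
      exact_mod_cast this
    have hv0 : (0 : ℝ) < P.card := by linarith
    set p : ℝ := 4 * P.card / E.card with hpdef
    have hp0 : 0 ≤ p := by
      rw [hpdef]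
      exact div_nonneg (mul_nonneg (by norm_num) hA0) (le_of_lt hee0)
    have hp1 : p ≤ 1 := by
      rw [hpdef, div_le_one hee0]
      linarith
    have hamp := amplify P hPx E he1 he2 hltE hinE h4quad p hp0 hp1
    rw [← hXdef] at hamp
    have hq : p * E.card = 4 * P.card := by
      rw [hpdef]
      field_simp
    have hXnn : (0 : ℝ) ≤ X.card := Nat.cast_nonneg _
    have h6 : 2 * (p ^ 2 * E.card) * (E.card : ℝ) ^ 4 ≤
        (6 * (p * P.card) + p ^ 4 * X.card) * (E.card : ℝ) ^ 4 :=
      mul_le_mul_of_nonneg_right hamp (pow_nonneg (le_of_lt hee0) 4)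
    have hcube : (E.card : ℝ) ^ 3 ≤ 32 * (P.card : ℝ) ^ 2 * X.card := by
      have e1 : 2 * (p ^ 2 * E.card) * (E.card : ℝ) ^ 4
          = 2 * (p * E.card) ^ 2 * (E.card : ℝ) ^ 3 := by ring
      have e2 : (6 * (p * P.card) + p ^ 4 * X.card) * (E.card : ℝ) ^ 4
          = 6 * (P.card : ℝ) * (p * E.card) * (E.card : ℝ) ^ 3
            + (p * E.card) ^ 4 * X.card := by ring
      rw [e1, e2, hq] at h6
      nlinarith [h6, hv0, mul_pos hv0 hv0]
    have hX2 : (X.card : ℝ) ≤ (L.card : ℝ) * L.card := by exact_mod_cast hXcard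
    have hcube2 : (E.card : ℝ) ^ 3 ≤ 32 * (P.card : ℝ) ^ 2 * ((L.card : ℝ)) ^ 2 := by
      have h32 : (0 : ℝ) ≤ 32 * (P.card : ℝ) ^ 2 := mul_nonneg (by norm_num) (pow_nonneg hA0 2)
      calc (E.card : ℝ) ^ 3 ≤ 32 * (P.card : ℝ) ^ 2 * X.card := hcube
        _ ≤ 32 * (P.card : ℝ) ^ 2 * ((L.card : ℝ) * L.card) :=
            mul_le_mul_of_nonneg_left hX2 h32
        _ = 32 * (P.card : ℝ) ^ 2 * ((L.card : ℝ)) ^ 2 := by ring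
    have hA3 : ((P.card : ℝ) ^ ((2 : ℝ) / 3)) ^ (3 : ℕ) = (P.card : ℝ) ^ 2 := by
      rw [← Real.rpow_natCast ((P.card : ℝ) ^ ((2 : ℝ) / 3)) 3, ← Real.rpow_mul hA0]
      norm_num
    have hB3 : ((L.card : ℝ) ^ ((2 : ℝ) / 3)) ^ (3 : ℕ) = (L.card : ℝ) ^ 2 := by
      rw [← Real.rpow_natCast ((L.card : ℝ) ^ ((2 : ℝ) / 3)) 3, ← Real.rpow_mul hB0]
      norm_num
    have hrw : (4 * (P.card : ℝ) ^ ((2 : ℝ) / 3) * (L.card : ℝ) ^ ((2 : ℝ) / 3)) ^ (3 : ℕ)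
        = 64 * ((P.card : ℝ)) ^ 2 * ((L.card : ℝ)) ^ 2 := by
      rw [mul_pow, mul_pow, hA3, hB3]
      norm_num
    have hEle : (E.card : ℝ) ≤ 4 * (P.card : ℝ) ^ ((2 : ℝ) / 3) * (L.card : ℝ) ^ ((2 : ℝ) / 3) := by
      apply le_of_pow_le_pow_left₀ (n := 3) (by norm_num) hpow0
      rw [hrw]
      nlinarith [hcube2, sq_nonneg ((P.card : ℝ) * L.card)]
    linarith

end STproof

open STproof in
set_option maxHeartbeats 1000000 in
/-- **The Szemerédi–Trotter theorem with explicit constants** (Fact 1.2). -/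
theorem szemeredi_trotter
    (P : Finset (ℝ × ℝ)) (L : Finset (Set (ℝ × ℝ)))
    (hL : ∀ l ∈ L, ∃ a b c : ℝ, (a, b) ≠ (0, 0) ∧ l = {q : ℝ × ℝ | a * q.1 + b * q.2 = c}) :
    (({pl : (ℝ × ℝ) × Set (ℝ × ℝ) | pl.1 ∈ P ∧ pl.2 ∈ L ∧ pl.1 ∈ pl.2}.ncard : ℝ)) ≤
      4 * (P.card : ℝ) ^ ((2 : ℝ) / 3) * (L.card : ℝ) ^ ((2 : ℝ) / 3)
        + 4 * P.card + L.card := by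
  classical
  -- choose a shear making all abscissas distinct
  set B : Finset ℝ :=
    (P ×ˢ P).image (fun pr : Pt × Pt => (pr.2.1 - pr.1.1) / (pr.1.2 - pr.2.2)) with hBdef
  obtain ⟨t, ht⟩ := Infinite.exists_notMem_finset B
  set T : Pt → Pt := fun q => (q.1 + t * q.2, q.2) with hTdef
  have hTinj : Function.Injective T := by
    intro a b h
    have h' : (a.1 + t * a.2, a.2) = (b.1 + t * b.2, b.2) := h
    rw [Prod.mk.injEq] at h'
    obtain ⟨h1, h2⟩ := h'
    rw [h2] at h1
    have : a.1 = b.1 := by linarith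
    exact Prod.ext this h2
  set P' : Finset Pt := P.image T with hP'def
  set L' : Finset (Set Pt) := L.image (fun l => T '' l) with hL'def
  have hP'x : ∀ p ∈ P', ∀ q ∈ P', p.1 = q.1 → p = q := by
    intro p' hp' q' hq' hx
    obtain ⟨p, hp, hTp⟩ := Finset.mem_image.mp hp'
    obtain ⟨q, hq, hTq⟩ := Finset.mem_image.mp hq'
    rw [← hTp, ← hTq] at hx ⊢
    have hx' : p.1 + t * p.2 = q.1 + t * q.2 := hx
    by_cases h2 : p.2 = q.2
    · have h1 : p.1 = q.1 := by rw [h2] at hx'; linarith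
      rw [Prod.ext h1 h2]
    · exfalso
      apply ht
      rw [hBdef]
      apply Finset.mem_image.mpr
      refine ⟨(p, q), Finset.mem_product.mpr ⟨hp, hq⟩, ?_⟩
      have hd : p.2 - q.2 ≠ 0 := fun h => h2 (by linarith)
      field_simp
      linarith
  have hL' : ∀ l' ∈ L', ∃ a b c : ℝ, (a, b) ≠ ((0 : ℝ), (0 : ℝ)) ∧
      l' = {q : Pt | a * q.1 + b * q.2 = c} := by
    intro l' hl'
    obtain ⟨l, hl, hTl⟩ := Finset.mem_image.mp hl'
    obtain ⟨a, b, c, hab, hset⟩ := hL l hl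
    refine ⟨a, b - a * t, c, ?_, ?_⟩
    · intro h
      have ha : a = 0 := congrArg Prod.fst h
      have hb : b - a * t = 0 := congrArg Prod.snd h
      rw [ha] at hb
      apply hab
      rw [ha]
      have : b = 0 := by linarith
      rw [this]
    · rw [← hTl]
      ext q
      simp only [Set.mem_image, Set.mem_setOf_eq]
      constructor
      · rintro ⟨w, hw, rfl⟩
        rw [hset] at hw
        simp only [Set.mem_setOf_eq] at hw
        show a * (w.1 + t * w.2) + (b - a * t) * w.2 = c
        linear_combination hw
      · intro hq
        refine ⟨(q.1 - t * q.2, q.2), ?_, ?_⟩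
        · rw [hset]
          simp only [Set.mem_setOf_eq]
          linear_combination hq
        · show (q.1 - t * q.2 + t * q.2, q.2) = q
          exact Prod.ext (by ring) rfl
  have hP'card : P'.card = P.card := Finset.card_image_of_injective _ hTinj
  have hL'card : L'.card = L.card :=
    Finset.card_image_of_injective _ (Set.image_injective.mpr hTinj)
  -- incidence counts agree
  set g : Pt × Set Pt → Pt × Set Pt := fun pl => (T pl.1, T '' pl.2) with hgdef
  have hginj : Function.Injective g := by
    intro u v h
    exact Prod.ext (hTinj (congrArg Prod.fst h))
      (Set.image_injective.mpr hTinj (congrArg Prod.snd h))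
  have hIeq : ((P' ×ˢ L').filter (fun pl : Pt × Set Pt => pl.1 ∈ pl.2)).card
      = ((P ×ˢ L).filter (fun pl : Pt × Set Pt => pl.1 ∈ pl.2)).card := by
    have hEq : (P' ×ˢ L').filter (fun pl : Pt × Set Pt => pl.1 ∈ pl.2)
        = ((P ×ˢ L).filter (fun pl : Pt × Set Pt => pl.1 ∈ pl.2)).image g := by
      ext pl
      simp only [Finset.mem_filter, Finset.mem_product, Finset.mem_image, hP'def, hL'def, hgdef]
      constructor
      · rintro ⟨⟨⟨p, hp, hTp⟩, ⟨l, hl, hTl⟩⟩, hmem⟩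
        refine ⟨(p, l), ⟨⟨hp, hl⟩, ?_⟩, ?_⟩
        · rw [← hTp, ← hTl] at hmem
          obtain ⟨w, hw, hTw⟩ := hmem
          rwa [← hTinj hTw]
        · show (T p, T '' l) = pl
          rw [hTp, hTl]
      · rintro ⟨⟨p, l⟩, ⟨⟨hp, hl⟩, hpl⟩, rfl⟩
        exact ⟨⟨⟨p, hp, rfl⟩, ⟨l, hl, rfl⟩⟩, Set.mem_image_of_mem T hpl⟩
    rw [hEq]
    exact Finset.card_image_of_injective _ hginj
  have hset : {pl : Pt × Set Pt | pl.1 ∈ P ∧ pl.2 ∈ L ∧ pl.1 ∈ pl.2}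
      = ↑((P ×ˢ L).filter (fun pl : Pt × Set Pt => pl.1 ∈ pl.2)) := by
    ext pl
    simp only [Set.mem_setOf_eq, Finset.coe_filter, Finset.mem_product]
    tauto
  rw [hset, Set.ncard_coe_finset]
  have hmain := main_distinct P' L' hL' hP'x
  rw [hIeq, hP'card, hL'card] at hmain
  exact hmain

end
end
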